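/- arXiv:1110.1062 — 7 statements merged into one kernel-verified Lean document; each statement's English description precedes it below -/
import Mathlib

section
/- For every positive integer k, the integral from 0 to 1 of (1-x)(k+1-x)^{k-1}/k! with respect to x equals k^k/(k+1)!. -/
/-- For every positive integer `k`,
`∫₀¹ (1-x)(k+1-x)^(k-1)/k! dx = k^k/(k+1)!`. -/
theorem stmt0 (k : ℕ) (hk : 1 ≤ k) :
    ∫ x in (0:ℝ)..1, (1 - x) * ((k : ℝ) + 1 - x) ^ (k - 1) / (Nat.factorial k) =
      (k : ℝ) ^ k / (Nat.factorial (k + 1)) := by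
  have hk1 : k - 1 + 1 = k := Nat.succ_pred_eq_of_pos hk
  set F : ℝ → ℝ := fun x =>
    (((k:ℝ)+1-x)^k - ((k:ℝ)+1-x)^(k+1)/((k:ℝ)+1)) / (Nat.factorial k) with hF
  have hderiv : ∀ x ∈ Set.uIcc (0:ℝ) 1, HasDerivAt F
      ((1 - x) * ((k : ℝ) + 1 - x) ^ (k - 1) / (Nat.factorial k)) x := by
    intro x _
    have hx : HasDerivAt (fun x : ℝ => (k:ℝ)+1-x) (-1) x := by
      simpa using (hasDerivAt_id x).const_sub ((k:ℝ)+1)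
    have h2 := hx.pow k
    have h3 := (hx.pow (k+1)).div_const ((k:ℝ)+1)
    have h := (h2.sub h3).div_const (Nat.factorial k : ℝ)
    convert h using 1
    · rfl
    · rfl
    · rfl
    have hkpos : ((k:ℝ)+1) ≠ 0 := by positivity
    simp only [Nat.add_sub_cancel, Nat.cast_add, Nat.cast_one]
    rw [show ((k:ℝ)+1-x)^k = ((k:ℝ)+1-x)^(k-1) * ((k:ℝ)+1-x) by
      rw [← pow_succ, hk1]]
    field_simp
    ring
  have hcont : IntervalIntegrable
      (fun x => (1 - x) * ((k : ℝ) + 1 - x) ^ (k - 1) / (Nat.factorial k)) MeasureTheory.volume 0 1 := by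
    apply Continuous.intervalIntegrable
    continuity
  have := intervalIntegral.integral_eq_sub_of_hasDerivAt hderiv hcont
  rw [this, hF]
  simp only []
  have hkpos : ((k:ℝ)+1) ≠ 0 := by positivity
  have hfac : (Nat.factorial (k+1) : ℝ) = ((k:ℝ)+1) * Nat.factorial k := by
    push_cast [Nat.factorial_succ]; ring
  have hfn : (Nat.factorial k : ℝ) ≠ 0 := by positivity
  rw [hfac]
  rw [show ((k:ℝ)+1-1) = (k:ℝ) by ring, show ((k:ℝ)+1-0) = (k:ℝ)+1 by ring]
  rw [pow_succ, pow_succ]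
  field_simp
  ring
end

section
/- Define G_0(x) = 1 and, for n ≥ 1, G_{2n}(x) = ∑_{k=1}^{n} G_{2(n-k)}(x) · ∫_0^{1-x} G_{2(k-1)}(y) dy. Then for all n ≥ 0 and all x ∈ [0,1], G_{2n}(x) = (1-x)(n+1-x)^{n-1}/n!. -/
open Finset fwdDiff



lemma fd_pow_zero (k : ℕ) : ∀ m : ℕ, k < m → ∀ x : ℝ,
    (fwdDiff (1:ℝ))^[m] (fun y : ℝ => (x + y) ^ k) = 0 := by
  induction k using Nat.strong_induction_on with
  | _ k IH =>
    intro m hm x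
    obtain ⟨m', rfl⟩ : ∃ m', m = m' + 1 := ⟨m - 1, by omega⟩
    have hstep : fwdDiff (1:ℝ) (fun y : ℝ => (x + y) ^ k)
        = ∑ j ∈ range k, (k.choose j : ℝ) • (fun y : ℝ => (x + y) ^ j) := by
      funext y
      simp only [fwdDiff, Finset.sum_apply, Pi.smul_apply, smul_eq_mul]
      have h1 : x + (y + 1) = (x + y) + 1 := by ring
      rw [h1, add_pow, Finset.sum_range_succ]
      simp only [Nat.choose_self, one_pow, mul_one, Nat.cast_one, Nat.sub_self, pow_zero]
      rw [add_sub_cancel_right]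
      exact Finset.sum_congr rfl fun j _ => by ring
    rw [Function.iterate_succ_apply, hstep, fwdDiff_iter_finset_sum]
    refine Finset.sum_eq_zero fun j hj => ?_
    have hj' := Finset.mem_range.mp hj
    rw [fwdDiff_iter_const_smul, IH j hj' m' (by omega) x, smul_zero]

lemma fd (m k : ℕ) (hk : k < m) (x : ℝ) :
    ∑ i ∈ range (m + 1), ((-1:ℝ)) ^ (m - i) * (m.choose i : ℝ) * (x + i) ^ k = 0 := by
  have h := fwdDiff_iter_eq_sum_shift (1:ℝ) (fun y : ℝ => (x + y) ^ k) m 0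
  rw [fd_pow_zero k m hk x] at h
  have h2 : (0:ℝ) = ∑ i ∈ range (m + 1), ((-1:ℤ) ^ (m - i) * (m.choose i : ℤ)) • (x + ((0:ℝ) + i • (1:ℝ))) ^ k := h
  rw [h2]
  refine Finset.sum_congr rfl fun i _ => ?_
  push_cast [zsmul_eq_mul]
  ring_nf

lemma abelQ : ∀ (m : ℕ) (x y : ℝ),
    (x + y + (m:ℝ) + 1) ^ (m+1) = (y + (m:ℝ) + 1) ^ (m+1) +
      ∑ i ∈ range (m+1), (((m+1).choose (i+1) : ℕ) : ℝ) * x * (x + i + 1) ^ i * (y + (m:ℝ) - i) ^ (m - i) := by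
  intro m
  induction m with
  | zero => intro x y; simp; ring
  | succ m IH =>
    intro x y
    set c : ℕ → ℝ := fun i => (((m+2).choose (i+1) : ℕ) : ℝ) * x * (x + i + 1) ^ i with hc
    set g : ℝ → ℝ := fun y => (y + (x + (m:ℝ) + 2)) ^ (m+2) - (y + ((m:ℝ) + 2)) ^ (m+2)
      - ∑ i ∈ range (m+2), c i * (y + ((m:ℝ) + 1 - i)) ^ (m + 1 - i) with hg
    have hderiv : ∀ y : ℝ, HasDerivAt g 0 y := by
      intro y
      have H : ∀ (a : ℝ) (p : ℕ), HasDerivAt (fun y : ℝ => (y + a) ^ p)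
          ((p:ℝ) * (y + a) ^ (p - 1)) y := by
        intro a p
        simpa using ((hasDerivAt_id y).add_const a).fun_pow p
      have h1 := H (x + (m:ℝ) + 2) (m+2)
      have h2 := H ((m:ℝ) + 2) (m+2)
      have h3 : HasDerivAt (fun y : ℝ => ∑ i ∈ range (m+2), c i * (y + ((m:ℝ) + 1 - i)) ^ (m + 1 - i))
          (∑ i ∈ range (m+2), c i * (((m + 1 - i : ℕ) : ℝ) * (y + ((m:ℝ) + 1 - i)) ^ (m + 1 - i - 1))) y := by
        exact HasDerivAt.fun_sum (fun i _ => (H ((m:ℝ) + 1 - i) (m + 1 - i)).const_mul (c i))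
      have hD := (h1.sub h2).sub h3
      have hzero : ((m+2:ℕ):ℝ) * (y + (x + (m:ℝ) + 2)) ^ (m+2-1)
          - ((m+2:ℕ):ℝ) * (y + ((m:ℝ) + 2)) ^ (m+2-1)
          - (∑ i ∈ range (m+2), c i * (((m + 1 - i : ℕ) : ℝ) * (y + ((m:ℝ) + 1 - i)) ^ (m + 1 - i - 1))) = 0 := by
        have hsum : ∑ i ∈ range (m+2), c i * (((m + 1 - i : ℕ) : ℝ) * (y + ((m:ℝ) + 1 - i)) ^ (m + 1 - i - 1))
            = ((m:ℝ)+2) * ∑ i ∈ range (m+1), (((m+1).choose (i+1) : ℕ) : ℝ) * x * (x + i + 1) ^ i * (y + 1 + (m:ℝ) - i) ^ (m - i) := by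
          rw [Finset.sum_range_succ]
          simp only [Nat.sub_self]
          rw [Finset.mul_sum, Nat.cast_zero, zero_mul, mul_zero, add_zero]
          refine Finset.sum_congr rfl fun i hi => ?_
          have hi' := Finset.mem_range.mp hi
          have hch : ((m+2).choose (i+1)) * (m + 1 - i) = (m+2) * ((m+1).choose (i+1)) := by
            have e1 : m + 2 - (i+1) = m + 1 - i := by omega
            have h1 := Nat.choose_succ_right_eq (m+2) (i+1)
            have h2 := Nat.add_one_mul_choose_eq (m+1) (i+1)
            rw [e1] at h1
            calc ((m+2).choose (i+1)) * (m + 1 - i) = (m+2).choose (i+2) * (i+2) := h1.symm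
            _ = (m+2) * ((m+1).choose (i+1)) := by rw [← h2]
          have hcast : ((m + 1 - i : ℕ) : ℝ) = (m:ℝ) + 1 - i := by
            rw [Nat.cast_sub (by omega : i ≤ m + 1)]; push_cast; ring
          have hchR : (((m+2).choose (i+1) : ℕ) : ℝ) * ((m:ℝ) + 1 - i)
              = ((m:ℝ) + 2) * (((m+1).choose (i+1) : ℕ) : ℝ) := by
            have := congrArg (fun n : ℕ => (n : ℝ)) hch
            push_cast at this
            rw [← hcast]
            push_cast
            linarith [this]
          have hexp : m + 1 - i - 1 = m - i := by omega
          rw [hexp, hcast, hc]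
          have hbase : (y + ((m:ℝ) + 1 - i)) = (y + 1 + (m:ℝ) - i) := by ring
          rw [hbase]
          linear_combination (x * (x + (i:ℝ) + 1) ^ i * (y + 1 + (m:ℝ) - (i:ℝ)) ^ (m - i)) * hchR
        rw [hsum]
        have hIH := IH x (y+1)
        have e1 : (x + (y+1) + (m:ℝ) + 1) = (y + (x + (m:ℝ) + 2)) := by ring
        rw [e1] at hIH
        have e2 : ((y+1) + (m:ℝ) + 1) = (y + ((m:ℝ) + 2)) := by ring
        rw [e2] at hIH
        have hexp2 : m + 2 - 1 = m + 1 := by omega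
        rw [hexp2]
        push_cast
        linear_combination ((m:ℝ) + 2) * hIH
      rw [hzero] at hD
      exact hD
    have hconst : ∀ a b : ℝ, g a = g b :=
      is_const_of_deriv_eq_zero (fun y => (hderiv y).differentiableAt)
        (fun y => (hderiv y).deriv)
    have hgy0 : g (-(x + (m:ℝ) + 2)) = 0 := by
      rw [hg]
      simp only
      have e0 : (-(x + (m:ℝ) + 2) + (x + (m:ℝ) + 2)) = 0 := by ring
      rw [e0, zero_pow (by omega : m + 2 ≠ 0)]
      have hfd := fd (m+2) (m+1) (by omega) x
      rw [Finset.sum_range_succ'] at hfd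
      -- hfd : ∑ i ∈ range (m+2), (-1)^(m+2-(i+1)) * C(m+2,i+1) * (x+(i+1))^(m+1) + (-1)^(m+2-0)*C(m+2,0)*(x+0)^(m+1) = 0
      have hT : ∑ i ∈ range (m+2), c i * (-(x + (m:ℝ) + 2) + ((m:ℝ) + 1 - i)) ^ (m + 1 - i)
          = x * ∑ i ∈ range (m+2), ((-1:ℝ)) ^ (m + 2 - (i+1)) * ((m+2).choose (i+1) : ℝ) * (x + ((i:ℕ)+1:ℕ)) ^ (m+1) := by
        rw [Finset.mul_sum]
        refine Finset.sum_congr rfl fun i hi => ?_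
        have hi' := Finset.mem_range.mp hi
        have e3 : (-(x + (m:ℝ) + 2) + ((m:ℝ) + 1 - i)) = -(x + i + 1) := by ring
        rw [e3, hc]
        have e4 : (-(x + (i:ℝ) + 1)) ^ (m + 1 - i) = ((-1:ℝ)) ^ (m + 1 - i) * (x + i + 1) ^ (m + 1 - i) := by
          rw [neg_pow]
        rw [e4]
        have e5 : (x + (i:ℝ) + 1) ^ i * (x + (i:ℝ) + 1) ^ (m + 1 - i) = (x + (i:ℝ) + 1) ^ (m+1) := by
          rw [← pow_add]; congr 1; omega
        have e6 : m + 2 - (i+1) = m + 1 - i := by omega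
        rw [e6]
        push_cast
        calc (((m+2).choose (i+1) : ℕ) : ℝ) * x * (x + i + 1) ^ i * ((-1:ℝ) ^ (m + 1 - i) * (x + i + 1) ^ (m + 1 - i))
            = x * ((-1:ℝ) ^ (m + 1 - i) * (((m+2).choose (i+1) : ℕ) : ℝ) * ((x + (i:ℝ) + 1) ^ i * (x + (i:ℝ) + 1) ^ (m + 1 - i))) := by ring
          _ = _ := by rw [e5]; try push_cast; try ring
      rw [hT]
      have hfd2 : ∑ i ∈ range (m+2), ((-1:ℝ)) ^ (m + 2 - (i+1)) * ((m+2).choose (i+1) : ℝ) * (x + ((i:ℕ)+1:ℕ)) ^ (m+1)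
          = -(((-1:ℝ)) ^ (m + 2) * x ^ (m+1)) := by
        have : ((-1:ℝ)) ^ (m + 2 - 0) * ((m+2).choose 0 : ℝ) * (x + (0:ℕ)) ^ (m+1) = ((-1:ℝ)) ^ (m + 2) * x ^ (m+1) := by
          simp
        rw [this] at hfd
        linarith [hfd]
      rw [hfd2]
      have e7 : (-(x + (m:ℝ) + 2) + ((m:ℝ) + 2)) ^ (m+2) = ((-1:ℝ)) ^ (m+2) * x ^ (m+2) := by
        rw [show (-(x + (m:ℝ) + 2) + ((m:ℝ) + 2)) = -x by ring, neg_pow]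
      rw [e7]
      ring
    have hgy : g y = 0 := by rw [hconst y (-(x + (m:ℝ) + 2))]; exact hgy0
    rw [hg] at hgy
    simp only at hgy
    have hS : ∑ i ∈ range (m+1+1), (((m+1+1).choose (i+1) : ℕ) : ℝ) * x * (x + ↑i + 1) ^ i * (y + ((m:ℝ) + 1) - ↑i) ^ (m + 1 - i)
        = ∑ i ∈ range (m+2), c i * (y + ((m:ℝ) + 1 - ↑i)) ^ (m + 1 - i) := by
      refine Finset.sum_congr rfl fun i _ => ?_
      rw [hc]
      have : (y + ((m:ℝ) + 1) - ↑i) = (y + ((m:ℝ) + 1 - ↑i)) := by ring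
      rw [this]
      try norm_num
    push_cast
    rw [hS]
    linear_combination hgy

lemma AC (n : ℕ) (s : ℝ) :
    ((n:ℝ) + 1 + s) ^ n = ((n:ℝ) + 1 - s) ^ n +
      s * ∑ k ∈ range n, (((n+1).choose (k+1) : ℕ) : ℝ) * ((k:ℝ) + 1 - s) ^ k * ((n:ℝ) - k + s) ^ (n - 1 - k) := by
  set A : ℝ := ∑ i ∈ range (n+1), (((n+1).choose (i+1) : ℕ) : ℝ) * ((i:ℝ) + 1 - s) ^ i * ((n:ℝ) - i + s) ^ (n - i) with hA
  set B : ℝ := ∑ i ∈ range (n+1), (((n+1).choose (i+1) : ℕ) : ℝ) * ((i:ℝ) + 1 + s) ^ i * ((n:ℝ) - i - s) ^ (n - i) with hB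
  set Sg : ℝ := ∑ k ∈ range n, (((n+1).choose (k+1) : ℕ) : ℝ) * ((k:ℝ) + 1 - s) ^ k * ((n:ℝ) - k + s) ^ (n - 1 - k) with hSg
  set S : ℝ := ∑ k ∈ range n, (((n+1).choose (k+1) : ℕ) : ℝ) * ((k:ℝ) + 1 - s) ^ (k+1) * ((n:ℝ) - k + s) ^ (n - 1 - k) with hS
  have E1 : ((n:ℝ)+1) ^ (n+1) = (s + (n:ℝ) + 1) ^ (n+1) + (-s) * A := by
    have h1 := abelQ n (-s) s
    have e : (-s + s + (n:ℝ) + 1) = ((n:ℝ)+1) := by ring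
    rw [e] at h1
    rw [h1, hA, Finset.mul_sum]
    congr 1
    refine Finset.sum_congr rfl fun i _ => ?_
    rw [show (-s + (i:ℝ) + 1) = ((i:ℝ) + 1 - s) from by ring,
        show (s + (n:ℝ) - (i:ℝ)) = ((n:ℝ) - (i:ℝ) + s) from by ring]
    ring
  have E2 : ((n:ℝ)+1) ^ (n+1) = ((n:ℝ) + 1 - s) ^ (n+1) + s * B := by
    have h2 := abelQ n s (-s)
    have e : (s + -s + (n:ℝ) + 1) = ((n:ℝ)+1) := by ring
    rw [e] at h2
    have e2 : (-s + (n:ℝ) + 1) = ((n:ℝ) + 1 - s) := by ring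
    rw [e2] at h2
    rw [h2, hB, Finset.mul_sum]
    congr 1
    refine Finset.sum_congr rfl fun i _ => ?_
    rw [show (s + (i:ℝ) + 1) = ((i:ℝ) + 1 + s) from by ring,
        show (-s + (n:ℝ) - (i:ℝ)) = ((n:ℝ) - (i:ℝ) - s) from by ring]
    ring
  have E3 : A = ((n:ℝ) + 1 - s) ^ n + ((n:ℝ)+1) * Sg - S := by
    rw [hA, Finset.sum_range_succ]
    rw [Nat.choose_self, Nat.sub_self, pow_zero, Nat.cast_one, one_mul, mul_one]
    rw [show ((n:ℝ) + 1 - s) = ((n:ℝ) + 1 - s) from rfl]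
    have hrest : ∑ i ∈ range n, (((n+1).choose (i+1) : ℕ) : ℝ) * ((i:ℝ) + 1 - s) ^ i * ((n:ℝ) - i + s) ^ (n - i)
        = ((n:ℝ)+1) * Sg - S := by
      rw [hSg, hS, Finset.mul_sum, ← Finset.sum_sub_distrib]
      refine Finset.sum_congr rfl fun i hi => ?_
      have hi' := Finset.mem_range.mp hi
      rw [show n - i = (n - 1 - i) + 1 from by omega, pow_succ, pow_succ]
      ring
    rw [hrest]
    ring
  have E4 : S = B - ((n:ℝ) + 1 + s) ^ n := by
    rw [hB, Finset.sum_range_succ]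
    rw [Nat.choose_self, Nat.sub_self, pow_zero, Nat.cast_one, one_mul, mul_one]
    have hrefl : S = ∑ i ∈ range n, (((n+1).choose (i+1) : ℕ) : ℝ) * ((i:ℝ) + 1 + s) ^ i * ((n:ℝ) - i - s) ^ (n - i) := by
      rw [hS, ← Finset.sum_range_reflect]
      refine Finset.sum_congr rfl fun k hk => ?_
      have hk' := Finset.mem_range.mp hk
      have hch : (n+1).choose (n - 1 - k + 1) = (n+1).choose (k+1) := by
        rw [show n - 1 - k + 1 = (n+1) - (k+1) from by omega]
        exact Nat.choose_symm (by omega)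
      rw [hch]
      have hc1 : ((n - 1 - k : ℕ) : ℝ) = (n:ℝ) - 1 - k := by
        rw [Nat.cast_sub (by omega : k ≤ n - 1), Nat.cast_sub (by omega : 1 ≤ n)]
        push_cast; ring
      rw [hc1]
      rw [show ((n:ℝ) - 1 - (k:ℝ) + 1 - s) = ((n:ℝ) - k - s) from by ring]
      rw [show ((n:ℝ) - ((n:ℝ) - 1 - (k:ℝ)) + s) = ((k:ℝ) + 1 + s) from by ring]
      rw [show n - 1 - (n - 1 - k) = k from by omega]
      rw [show n - 1 - k + 1 = n - k from by omega]
      ring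
    rw [hrefl]
    ring
  have hne : ((n:ℝ) + 1) ≠ 0 := by positivity
  have key : ((n:ℝ)+1) * (((n:ℝ) + 1 + s) ^ n) = ((n:ℝ)+1) * (((n:ℝ) + 1 - s) ^ n + s * Sg) := by
    linear_combination (-1 : ℝ) * E1 + E2 + s * E3 + (-s) * E4
  exact mul_left_cancel₀ hne key



/-- `G 0 x = 1` and
`G n x = ∑_{k=1}^{n} G (n-k) x · ∫₀^{1-x} G (k-1) y dy` (here the sum is
reindexed by `k ↦ k+1` over `Finset.range n`), where `G n` stands for the
paper's `G_{2n}`. -/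
noncomputable def G : ℕ → ℝ → ℝ
  | 0, _ => 1
  | (n + 1), x =>
      ∑ k ∈ (Finset.range (n + 1)).attach,
        G (n - k.1) x * ∫ y in (0:ℝ)..(1 - x), G k.1 y
  termination_by n => n
  decreasing_by
  · exact Nat.lt_succ_of_le (Nat.sub_le _ _)
  · exact Nat.lt_succ_of_le (Nat.lt_succ_iff.mp (Finset.mem_range.mp k.2))

lemma G_zero (x : ℝ) : G 0 x = 1 := by rw [G]

lemma G_succ (n : ℕ) (x : ℝ) : G (n+1) x
    = ∑ k ∈ Finset.range (n + 1), G (n - k) x * ∫ y in (0:ℝ)..(1 - x), G k y := by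
  rw [G]
  exact Finset.sum_attach (Finset.range (n+1)) (fun k => G (n - k) x * ∫ y in (0:ℝ)..(1 - x), G k y)

lemma Hderiv (j : ℕ) (y : ℝ) :
    HasDerivAt (fun y : ℝ => ((j:ℝ)+2-y)^(j+1)/(Nat.factorial (j+1) : ℝ) - ((j:ℝ)+2-y)^(j+2)/(Nat.factorial (j+2) : ℝ))
      ((1 - y) * ((j:ℝ) + 2 - y)^j / (Nat.factorial (j+1) : ℝ)) y := by
  have hb : HasDerivAt (fun y : ℝ => (j:ℝ)+2-y) (-1) y := by
    simpa using (hasDerivAt_id y).const_sub ((j:ℝ)+2)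
  have h1 := ((hb.fun_pow (j+1)).div_const (Nat.factorial (j+1) : ℝ))
  have h2 := ((hb.fun_pow (j+2)).div_const (Nat.factorial (j+2) : ℝ))
  have h := h1.sub h2
  convert h using 1
  case e'_4 => rfl
  case e'_5 => rfl
  case e'_8 => rfl
  have hf1 : (Nat.factorial (j+1) : ℝ) ≠ 0 := by positivity
  have hf2 : (Nat.factorial (j+2) : ℝ) ≠ 0 := by positivity
  have hfs : (Nat.factorial (j+2) : ℝ) = ((j:ℝ)+2) * (Nat.factorial (j+1) : ℝ) := by
    rw [show Nat.factorial (j+2) = (j+2) * Nat.factorial (j+1) from Nat.factorial_succ (j+1)]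
    push_cast; ring
  rw [show (j+1+1) = (j+2) from rfl] at *
  rw [show (j+1) - 1 = j from rfl, show (j+2) - 1 = j+1 from rfl]
  rw [hfs]
  field_simp
  push_cast
  ring
lemma integF (j : ℕ) (a b : ℝ) :
    ∫ y in a..b, ((1 - y) * ((j:ℝ) + 2 - y)^j / (Nat.factorial (j+1) : ℝ))
      = (((j:ℝ)+2-b)^(j+1)/(Nat.factorial (j+1) : ℝ) - ((j:ℝ)+2-b)^(j+2)/(Nat.factorial (j+2) : ℝ))
        - (((j:ℝ)+2-a)^(j+1)/(Nat.factorial (j+1) : ℝ) - ((j:ℝ)+2-a)^(j+2)/(Nat.factorial (j+2) : ℝ)) := by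
  refine intervalIntegral.integral_eq_sub_of_hasDerivAt (fun y _ => Hderiv j y) ?_
  exact (Continuous.intervalIntegrable (by continuity) a b)

lemma Jval (j : ℕ) (x : ℝ) (hx : x ∈ Set.Icc (0:ℝ) 1)
    (hG : ∀ y ∈ Set.Icc (0:ℝ) 1, G (j+1) y
      = (1-y) * (((j+1:ℕ):ℝ)+1-y)^(j+1-1) / (Nat.factorial (j+1) : ℝ)) :
    ∫ y in (0:ℝ)..(1-x), G (j+1) y
      = (1-x) * (((j:ℕ):ℝ)+1+x)^(j+1) / (Nat.factorial (j+1+1) : ℝ) := by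
  obtain ⟨hx0, hx1⟩ := hx
  have hsub : Set.uIcc (0:ℝ) (1-x) ⊆ Set.Icc (0:ℝ) 1 := by
    rw [Set.uIcc_of_le (by linarith : (0:ℝ) ≤ 1-x)]
    exact Set.Icc_subset_Icc (le_refl _) (by linarith)
  have hcongr : ∫ y in (0:ℝ)..(1-x), G (j+1) y
      = ∫ y in (0:ℝ)..(1-x), ((1 - y) * ((j:ℝ) + 2 - y)^j / (Nat.factorial (j+1) : ℝ)) := by
    refine intervalIntegral.integral_congr fun y hy => ?_
    rw [hG y (hsub hy)]
    push_cast
    norm_num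
    rw [show ((j:ℝ) + 1 + 1 - y) = ((j:ℝ) + 2 - y) from by ring]
  rw [hcongr, integF j 0 (1-x)]
  rw [show ((j:ℝ)+2-(1-x)) = ((j:ℝ)+1+x) from by ring, show ((j:ℝ)+2-(0:ℝ)) = ((j:ℝ)+2) from by ring]
  have hf1 : (Nat.factorial (j+1) : ℝ) ≠ 0 := by positivity
  have hf2 : (Nat.factorial (j+2) : ℝ) ≠ 0 := by positivity
  have hfs : (Nat.factorial (j+2) : ℝ) = ((j:ℝ)+2) * (Nat.factorial (j+1) : ℝ) := by
    rw [show Nat.factorial (j+2) = (j+2) * Nat.factorial (j+1) from Nat.factorial_succ (j+1)]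
    push_cast; ring
  rw [show (j+1+1) = (j+2) from rfl, hfs]
  field_simp
  rw [pow_succ, pow_succ]
  push_cast
  ring

lemma finalg (m : ℕ) (x : ℝ) :
    ∑ k ∈ range m,
          (1 - x) * (((m - k:ℕ):ℝ) + 1 - x) ^ (m - k - 1) / ((m - k).factorial : ℝ) *
            ((1 - x) * ((k:ℝ) + x) ^ k / ((k + 1).factorial : ℝ)) +
        (1 - x) * ((m:ℝ) + x) ^ m / ((m + 1).factorial : ℝ) =
      (1 - x) * (((m + 1:ℕ):ℝ) + 1 - x) ^ (m + 1 - 1) / ((m + 1).factorial : ℝ) := by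
  simp only [Nat.add_sub_cancel]
  have hsum_eq : ∑ k ∈ range m, (((m+1).choose (k+1) : ℕ) : ℝ) * ((k:ℝ) + 1 - (1-x)) ^ k * ((m:ℝ) - k + (1-x)) ^ (m - 1 - k)
      = ∑ k ∈ range m, (((m+1).choose (k+1) : ℕ) : ℝ) * ((k:ℝ) + x) ^ k * ((m:ℝ) - (k:ℝ) + 1 - x) ^ (m - 1 - k) := by
    refine Finset.sum_congr rfl fun k _ => ?_
    rw [show ((k:ℝ) + 1 - (1-x)) = ((k:ℝ) + x) from by ring,
        show ((m:ℝ) - (k:ℝ) + (1-x)) = ((m:ℝ) - (k:ℝ) + 1 - x) from by ring]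
  have hAC2 : ((m:ℝ) + 2 - x) ^ m = ((m:ℝ) + x) ^ m +
      (1-x) * ∑ k ∈ range m, (((m+1).choose (k+1) : ℕ) : ℝ) * ((k:ℝ) + x) ^ k * ((m:ℝ) - (k:ℝ) + 1 - x) ^ (m - 1 - k) := by
    rw [show ((m:ℝ) + 2 - x) = ((m:ℝ) + 1 + (1-x)) from by ring,
        show ((m:ℝ) + x) = ((m:ℝ) + 1 - (1-x)) from by ring, ← hsum_eq]
    exact AC m (1-x)
  have hfacR : ∀ k ∈ range m, ((((m+1).choose (k+1)) : ℕ) : ℝ) * ((k+1).factorial : ℝ) * ((m-k).factorial : ℝ)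
      = ((m+1).factorial : ℝ) := by
    intro k hk
    have hk' := mem_range.mp hk
    have h := Nat.choose_mul_factorial_mul_factorial (show k+1 ≤ m+1 by omega)
    rw [show (m+1) - (k+1) = m - k from by omega] at h
    exact_mod_cast h
  have hsums : ∑ k ∈ range m,
          (1 - x) * (((m - k:ℕ):ℝ) + 1 - x) ^ (m - k - 1) / ((m - k).factorial : ℝ) *
            ((1 - x) * ((k:ℝ) + x) ^ k / ((k + 1).factorial : ℝ))
      = (1-x)^2 / ((m + 1).factorial : ℝ) *
          ∑ k ∈ range m, (((m+1).choose (k+1) : ℕ) : ℝ) * ((k:ℝ) + x) ^ k * ((m:ℝ) - (k:ℝ) + 1 - x) ^ (m - 1 - k) := by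
    rw [Finset.mul_sum]
    refine Finset.sum_congr rfl fun k hk => ?_
    have hk' := mem_range.mp hk
    rw [show ((m - k:ℕ):ℝ) = (m:ℝ) - (k:ℝ) from by rw [Nat.cast_sub (by omega : k ≤ m)],
        show m - k - 1 = m - 1 - k from by omega]
    have h1 : ((m-k).factorial : ℝ) ≠ 0 := by positivity
    have h2 : ((k+1).factorial : ℝ) ≠ 0 := by positivity
    have h3 : ((m+1).factorial : ℝ) ≠ 0 := by positivity
    field_simp
    linear_combination (-(1-x)^2 * ((k:ℝ)+x)^k * ((m:ℝ)-(k:ℝ)+1-x)^(m-1-k)) * (hfacR k hk)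
  push_cast
  linear_combination hsums - ((1-x)/((m + 1).factorial : ℝ)) * hAC2

lemma Gmain : ∀ n : ℕ, ∀ x ∈ Set.Icc (0:ℝ) 1,
    G n x = if n = 0 then 1 else (1-x) * ((n:ℝ)+1-x)^(n-1) / (Nat.factorial n : ℝ) := by
  intro n
  induction n using Nat.strong_induction_on with
  | _ n IH =>
    match n with
    | 0 => intro x hx; rw [G_zero]; simp
    | (m+1) =>
      intro x hx
      obtain ⟨hx0, hx1⟩ := hx
      rw [if_neg (Nat.succ_ne_zero m), G_succ]
      have hJ : ∀ k ∈ range (m+1), (∫ y in (0:ℝ)..(1-x), G k y)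
          = (1-x) * ((k:ℝ)+x)^k / (Nat.factorial (k+1) : ℝ) := by
        intro k hk
        match k with
        | 0 =>
          simp only [G_zero]
          simp [intervalIntegral.integral_const]
        | (j+1) =>
          have hk' : j+1 < m+1 := mem_range.mp hk
          have hG2 : ∀ y ∈ Set.Icc (0:ℝ) 1, G (j+1) y
              = (1-y) * (((j+1:ℕ):ℝ)+1-y)^(j+1-1) / (Nat.factorial (j+1) : ℝ) := by
            intro y hy
            rw [IH (j+1) hk' y hy, if_neg (Nat.succ_ne_zero j)]
          rw [Jval j x ⟨hx0, hx1⟩ hG2]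
          push_cast
          ring
      rw [Finset.sum_congr rfl (fun k hk => by rw [hJ k hk])]
      rw [Finset.sum_range_succ, Nat.sub_self, G_zero, one_mul]
      have hGk : ∀ k ∈ range m, G (m-k) x
          = (1-x) * (((m-k:ℕ):ℝ)+1-x)^(m-k-1) / (Nat.factorial (m-k) : ℝ) := by
        intro k hk
        have hk' := mem_range.mp hk
        rw [IH (m-k) (by omega) x ⟨hx0, hx1⟩, if_neg (by omega)]
      rw [Finset.sum_congr rfl (fun k hk => by rw [hGk k hk])]
      exact finalg m x

/-- `G_{2n}(x) = (1-x)(n+1-x)^{n-1}/n!` on `[0,1]` for all `n`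
(the `n = 0` case being the convention `G_0 = 1`). -/
theorem stmt2 :
    (∀ x : ℝ, G 0 x = 1) ∧
    ∀ n : ℕ, 1 ≤ n → ∀ x ∈ Set.Icc (0:ℝ) 1,
      G n x = (1 - x) * ((n : ℝ) + 1 - x) ^ (n - 1) / (Nat.factorial n) := by
  constructor
  · exact G_zero
  · intro n hn x hx
    have h := Gmain n x hx
    rwa [if_neg (by omega : n ≠ 0)] at h
end

section
/- The sequence β_{2k} = k^k/(k+1)! satisfies Carleman's condition: ∑_{k≥1} β_{2k}^{-1/(2k)} = ∞. -/
lemma term_ge (k : ℕ) (hk : 1 ≤ k) :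
    1 / (k : ℝ) ≤ ((k : ℝ) ^ k / (Nat.factorial (k + 1))) ^ (-(1 : ℝ) / (2 * k)) := by
  have hk1 : (1 : ℝ) ≤ (k : ℝ) := by exact_mod_cast hk
  have hk0 : (0 : ℝ) < (k : ℝ) := by linarith
  have hz : (-(1 : ℝ) / (2 * k)) ≤ 0 := by
    apply div_nonpos_of_nonpos_of_nonneg <;> linarith
  have hβpos : 0 < ((k : ℝ) ^ k / (Nat.factorial (k + 1))) := by
    apply div_pos (pow_pos hk0 k)
    exact_mod_cast Nat.factorial_pos (k + 1)
  have hle : ((k : ℝ) ^ k / (Nat.factorial (k + 1))) ≤ (k : ℝ) ^ k := by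
    apply div_le_self (by positivity)
    exact_mod_cast Nat.one_le_iff_ne_zero.mpr (Nat.factorial_ne_zero (k + 1))
  have h1 : ((k : ℝ) ^ k) ^ (-(1 : ℝ) / (2 * k)) ≤
      ((k : ℝ) ^ k / (Nat.factorial (k + 1))) ^ (-(1 : ℝ) / (2 * k)) :=
    Real.rpow_le_rpow_of_nonpos hβpos hle hz
  refine le_trans ?_ h1
  have hkne : (k : ℝ) ≠ 0 := ne_of_gt hk0
  have h2 : ((k : ℝ) ^ k) ^ (-(1 : ℝ) / (2 * k)) = (k : ℝ) ^ (-(1 : ℝ) / 2) := by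
    rw [← Real.rpow_natCast (k : ℝ) k, ← Real.rpow_mul hk0.le]
    congr 1
    field_simp
  rw [h2]
  have h3 : (k : ℝ) ^ (-(1 : ℝ)) ≤ (k : ℝ) ^ (-(1 : ℝ) / 2) :=
    Real.rpow_le_rpow_of_exponent_le hk1 (by norm_num)
  rw [Real.rpow_neg_one] at h3
  rw [one_div]
  exact h3

/-- Carleman's condition for `β_{2k} = k^k/(k+1)!`:
`∑_{k ≥ 1} β_{2k}^{-1/(2k)} = ∞`. -/
theorem stmt6 :
    Filter.Tendsto (fun n : ℕ => ∑ k ∈ Finset.Icc 1 n,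
        ((k : ℝ) ^ k / (Nat.factorial (k + 1))) ^ (-(1 : ℝ) / (2 * k)))
      Filter.atTop Filter.atTop := by
  refine Filter.tendsto_atTop_mono ?_ Real.tendsto_sum_range_one_div_nat_succ_atTop
  intro n
  rw [show Finset.Icc 1 n = Finset.Ico 1 (n+1) by rw [Finset.Ico_add_one_right_eq_Icc],
    Finset.sum_Ico_eq_sum_range]
  simp only [Nat.add_sub_cancel]
  apply Finset.sum_le_sum
  intro i _
  have := term_ge (1 + i) (by omega)
  calc (1 : ℝ) / (i + 1) = 1 / ((1 + i : ℕ) : ℝ) := by push_cast; ring_nf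
    _ ≤ _ := this
end

section
/- For every k ≥ 1 and x ∈ [0,1], ∫_0^{1-x} (1-y)(k-y)^{k-2}/(k-1)! dy = (1-x)(k-1+x)^{k-1}/k!. -/
/-- For `k ≥ 1` and `x ∈ [0,1]`,
`∫₀^{1-x} (1-y)(k-y)^(k-2)/(k-1)! dy = (1-x)(k-1+x)^(k-1)/k!`
(the exponents are integer powers, so that the `k = 1` case carries the
convention `G₀ = 1`). -/
theorem stmt10 (k : ℕ) (hk : 1 ≤ k) (x : ℝ) (hx : x ∈ Set.Icc (0:ℝ) 1) :
    ∫ y in (0:ℝ)..(1 - x),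
        (1 - y) * ((k : ℝ) - y) ^ ((k : ℤ) - 2) / (Nat.factorial (k - 1)) =
      (1 - x) * ((k : ℝ) - 1 + x) ^ ((k : ℤ) - 1) / (Nat.factorial k) := by
  obtain ⟨hx0, hx1⟩ := hx
  rcases Nat.lt_or_ge k 2 with h | h
  · interval_cases k
    simp only [Nat.cast_one]
    have h1 : ∀ᵐ y : ℝ, y ≠ (1:ℝ) := by
      rw [MeasureTheory.ae_iff]
      simpa using Real.volume_singleton
    have hcong : (∫ y in (0:ℝ)..(1 - x),
        (1 - y) * ((1 : ℝ) - y) ^ ((1 : ℤ) - 2) / (Nat.factorial (1 - 1)))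
        = ∫ y in (0:ℝ)..(1 - x), (1:ℝ) := by
      apply intervalIntegral.integral_congr_ae
      filter_upwards [h1] with y hy _
      have : (1:ℝ) - y ≠ 0 := sub_ne_zero.mpr (fun h => hy h.symm)
      simp only [Nat.sub_self, Nat.factorial_zero, Nat.cast_one]
      norm_num
      field_simp
    rw [hcong]
    simp
  · obtain ⟨n, rfl⟩ : ∃ n, k = n + 2 := ⟨k - 2, by omega⟩
    have hc : ((n + 2 : ℕ) : ℝ) = (n : ℝ) + 2 := by push_cast; ring
    have he1 : ((n + 2 : ℕ) : ℤ) - 2 = (n : ℤ) := by push_cast; ring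
    have he2 : ((n + 2 : ℕ) : ℤ) - 1 = ((n + 1 : ℕ) : ℤ) := by push_cast; ring
    simp only [hc, he1, he2, zpow_natCast]
    set c : ℝ := (n : ℝ) + 2 with hcdef
    set F : ℝ → ℝ := fun y => ((c - y) ^ (n + 1) - (c - y) ^ (n + 2) / (n + 2)) /
      (Nat.factorial (n + 1)) with hF
    have hfac : ((Nat.factorial (n + 1) : ℝ)) ≠ 0 := by positivity
    have hderiv : ∀ y : ℝ, HasDerivAt F ((1 - y) * (c - y) ^ n / (Nat.factorial (n + 1))) y := by
      intro y
      have hd : HasDerivAt (fun y : ℝ => c - y) (-1) y := by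
        simpa using (hasDerivAt_id y).const_sub c
      have h1 := hd.pow (n + 1)
      have h2 := (hd.pow (n + 2)).div_const ((n : ℝ) + 2)
      have := (h1.sub h2).div_const ((Nat.factorial (n + 1) : ℝ))
      refine this.congr_deriv ?_
      have hn2 : ((n : ℝ) + 2) ≠ 0 := by positivity
      simp only [Nat.add_sub_cancel]
      push_cast
      field_simp
      ring
    have hint : IntervalIntegrable
        (fun y : ℝ => (1 - y) * (c - y) ^ n / (Nat.factorial (n + 1)))
        MeasureTheory.volume 0 (1 - x) := by
      apply Continuous.intervalIntegrable
      fun_prop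
    have key := intervalIntegral.integral_eq_sub_of_hasDerivAt
      (f := F) (a := 0) (b := 1 - x) (fun y _ => hderiv y) hint
    have hfs : (Nat.factorial (n + 2) : ℝ) = ((n : ℝ) + 2) * (Nat.factorial (n + 1)) := by
      rw [Nat.factorial_succ]; push_cast; ring
    have heq : (n + 2 - 1) = n + 1 := by omega
    rw [heq, key, hF, hcdef, hfs]
    have hn2 : ((n : ℝ) + 2) ≠ 0 := by positivity
    field_simp
    ring
end

section
/- Let w be a Catalan word of length 2k (a pair-matched word reducible to the empty word by successively deleting double letters). If w = w₁w₂ with w₁, w₂ Catalan, then Q_w(x) = Q_{w₁}(x) · Q_{w₂}(x), where Q_w is the polynomial such that p_u(w) = ∫_0^1 Q_w(v_0) dv_0 obtained by integrating out all variables except v_0 in the volume integral ∫_{[0,1]^{k+1}} 1{v_{φ(i-1)} + v_{φ(i)} ≤ 1, i ∈ S∖{0}} dv_S. -/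
open MeasureTheory

/-- A word is pair-matched if each of its letters appears exactly twice. -/
def PairMatchedWord (w : List ℕ) : Prop := ∀ a ∈ w, w.count a = 2

/-- Reducibility to the empty word by successively deleting double letters. -/
inductive DoubleReduces : List ℕ → Prop
  | nil : DoubleReduces []
  | step (u v : List ℕ) (a : ℕ) : DoubleReduces (u ++ v) → DoubleReduces (u ++ a :: a :: v)

/-- A Catalan word: pair-matched and reducible to the empty word by
successively deleting double letters. -/
def IsCatalanWord (w : List ℕ) : Prop := PairMatchedWord w ∧ DoubleReduces w

/-- The Wigner link function `L(a,b) = (min(a,b), max(a,b))`. -/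
def wignerLink (a b : ℕ) : ℕ × ℕ := (min a b, max a b)

/-- The set `Π*(w)` of circuits `π : {0,…,2k} → {1,…,n}` with `π(0) = π(2k)`
such that `w[i] = w[j]` implies `L(π(i-1),π(i)) = L(π(j-1),π(j))`.  The letter
at the paper's position `i ∈ {1,…,2k}` is the list entry `w[(i-1)]?`. -/
def PiStar (w : List ℕ) (n : ℕ) : Set (ℕ → ℕ) :=
  {π | (∀ t ≤ w.length, π t ∈ Finset.Icc 1 n) ∧ π 0 = π w.length ∧
    ∀ s t, s < w.length → t < w.length → w[s]? = w[t]? →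
      wignerLink (π s) (π (s + 1)) = wignerLink (π t) (π (t + 1))}

/-- The set `S` of generating vertices of `w`: the vertex `0` together with
those `i` at which a letter occurs for the first time. -/
def genVertices (w : List ℕ) : Finset ℕ :=
  insert 0 (((Finset.range w.length).filter
    (fun t => ∀ s < t, w[s]? ≠ w[t]?)).image (· + 1))

/-- `φ` assigns to each vertex `j` the (unique) generating vertex `φ(j) ≤ j`
with `π(j) = π(φ(j))` for every circuit `π ∈ Π*(w)`. -/
def IsPhi (w : List ℕ) (φ : ℕ → ℕ) : Prop :=
  ∀ j ≤ w.length, φ j ∈ genVertices w ∧ φ j ≤ j ∧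
    ∀ (n : ℕ) (π : ℕ → ℕ), π ∈ PiStar w n → π j = π (φ j)
namespace Stmt12Aux

lemma wignerLink_comm (a b : ℕ) : wignerLink a b = wignerLink b a := by
  simp [wignerLink, min_comm, max_comm]

lemma wignerLink_cancel {a b c : ℕ} (h : wignerLink a b = wignerLink b c) : a = c := by
  simp only [wignerLink, Prod.mk.injEq] at h
  omega

lemma mem_genVertices_le {w : List ℕ} {j : ℕ} (h : j ∈ genVertices w) : j ≤ w.length := by
  simp only [genVertices, Finset.mem_insert, Finset.mem_image, Finset.mem_filter,
    Finset.mem_range] at h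
  rcases h with h | ⟨t, ⟨ht, _⟩, rfl⟩ <;> omega

lemma zero_mem_genVertices (w : List ℕ) : 0 ∈ genVertices w := Finset.mem_insert_self _ _

lemma mem_genVertices_iff {w : List ℕ} {j : ℕ} :
    j ∈ genVertices w ↔ j = 0 ∨ (1 ≤ j ∧ j - 1 < w.length ∧
      ∀ s < j - 1, w[s]? ≠ w[(j - 1)]?) := by
  simp only [genVertices, Finset.mem_insert, Finset.mem_image, Finset.mem_filter,
    Finset.mem_range]
  constructor
  · rintro (rfl | ⟨t, ⟨ht, hf⟩, rfl⟩)
    · exact Or.inl rfl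
    · exact Or.inr ⟨by omega, by simpa using ht, by simpa using hf⟩
  · rintro (rfl | ⟨h1, h2, h3⟩)
    · exact Or.inl rfl
    · exact Or.inr ⟨j - 1, ⟨h2, h3⟩, by omega⟩

/-- the circuit obtained by deleting two letters at positions `p, p+1`. -/
def delCirc (p : ℕ) (π : ℕ → ℕ) : ℕ → ℕ := fun t => if t ≤ p then π t else π (t + 2)

section del

variable {u rest : List ℕ} {a n : ℕ} {π : ℕ → ℕ}

lemma key_double (hπ : π ∈ PiStar (u ++ a :: a :: rest) n) :
    π (u.length + 2) = π u.length := by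
  obtain ⟨-, -, hc⟩ := hπ
  have hlen : (u ++ a :: a :: rest).length = u.length + 2 + rest.length := by simp; omega
  have h1 : (u ++ a :: a :: rest)[u.length]? = some a := by
    rw [List.getElem?_append_right (le_refl _)]; simp
  have h2 : (u ++ a :: a :: rest)[(u.length + 1)]? = some a := by
    rw [List.getElem?_append_right (by omega)]
    have : u.length + 1 - u.length = 1 := by omega
    rw [this]; rfl
  have := hc u.length (u.length + 1) (by omega) (by omega) (h1.trans h2.symm)
  exact (wignerLink_cancel this).symm

lemma delCirc_ge (hπ : π ∈ PiStar (u ++ a :: a :: rest) n) {t : ℕ} (ht : u.length ≤ t) :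
    delCirc u.length π t = π (t + 2) := by
  unfold delCirc
  rcases eq_or_lt_of_le ht with rfl | h
  · rw [if_pos (le_refl _), key_double hπ]
  · rw [if_neg (by omega)]

lemma get?_short_long {v : List ℕ} {s : ℕ} (hs : s < (u ++ v ++ rest).length) :
    (u ++ (v ++ rest))[s]? =
      (u ++ a :: a :: (v ++ rest))[(if s < u.length then s else s + 2)]? := by
  by_cases h : s < u.length
  · rw [if_pos h, List.getElem?_append_left h, List.getElem?_append_left h]
  · rw [if_neg h]
    rw [List.getElem?_append_right (by omega), List.getElem?_append_right (by omega : u.length ≤ s + 2)]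
    have : s + 2 - u.length = (s - u.length) + 2 := by omega
    rw [this]
    rfl

lemma mem_piStar_del {v : List ℕ} (hπ : π ∈ PiStar (u ++ a :: a :: (v ++ rest)) n) :
    delCirc u.length π ∈ PiStar (u ++ (v ++ rest)) n := by
  obtain ⟨hb, hcirc, hc⟩ := hπ
  have hπ' : π ∈ PiStar (u ++ a :: a :: (v ++ rest)) n := ⟨hb, hcirc, hc⟩
  have hlenL : (u ++ a :: a :: (v ++ rest)).length = u.length + 2 + (v.length + rest.length) := by
    simp; omega
  have hlenS : (u ++ (v ++ rest)).length = u.length + (v.length + rest.length) := by simp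
  refine ⟨?_, ?_, ?_⟩
  · intro t ht
    unfold delCirc
    split
    · exact hb t (by omega)
    · exact hb (t + 2) (by omega)
  · have h0 : delCirc u.length π 0 = π 0 := by unfold delCirc; rw [if_pos (Nat.zero_le _)]
    rw [h0, delCirc_ge hπ' (by omega)]
    rw [hcirc, hlenL, hlenS]
    congr 1
    omega
  · intro s t hs ht hst
    have hedge : ∀ s' < (u ++ (v ++ rest)).length,
        wignerLink (delCirc u.length π s') (delCirc u.length π (s' + 1)) =
        wignerLink (π (if s' < u.length then s' else s' + 2))
          (π ((if s' < u.length then s' else s' + 2) + 1)) := by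
      intro s' hs'
      by_cases h : s' < u.length
      · rw [if_pos h]
        unfold delCirc
        rw [if_pos (by omega : s' ≤ u.length), if_pos (by omega : s' + 1 ≤ u.length)]
      · rw [if_neg h]
        rw [delCirc_ge hπ' (by omega), delCirc_ge hπ' (by omega)]
    rw [hedge s hs, hedge t ht]
    refine hc _ _ ?_ ?_ ?_
    · split <;> omega
    · split <;> omega
    · rw [← get?_short_long (by simpa [hlenS] using hs), ← get?_short_long (by simpa [hlenS] using ht)]
      exact hst

end del

lemma prefix_closed {w₁ : List ℕ} (h : DoubleReduces w₁) :
    ∀ (rest : List ℕ) (n : ℕ) (π : ℕ → ℕ), π ∈ PiStar (w₁ ++ rest) n →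
      π w₁.length = π 0 := by
  induction h with
  | nil => intro rest n π _; rfl
  | step u v a h ih =>
    intro rest n π hπ
    have hπ' : π ∈ PiStar (u ++ a :: a :: (v ++ rest)) n := by
      have : (u ++ a :: a :: v) ++ rest = u ++ a :: a :: (v ++ rest) := by simp
      rwa [this] at hπ
    have h2 := mem_piStar_del hπ'
    have h3 : delCirc u.length π ((u ++ v).length) = delCirc u.length π 0 := by
      have := ih rest n (delCirc u.length π) (by rwa [← List.append_assoc] at h2)
      exact this
    have h4 : delCirc u.length π ((u ++ v).length) = π (u.length + v.length + 2) := by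
      rw [List.length_append, delCirc_ge hπ' (by omega)]
    have h5 : delCirc u.length π 0 = π 0 := by
      unfold delCirc; rw [if_pos (Nat.zero_le _)]
    have h6 : (u ++ a :: a :: v).length = u.length + v.length + 2 := by simp; omega
    rw [h6, ← h4, h3, h5]

lemma piStar_prefix {w₁ w₂ : List ℕ} (h : DoubleReduces w₁) {n : ℕ} {π : ℕ → ℕ}
    (hπ : π ∈ PiStar (w₁ ++ w₂) n) : π ∈ PiStar w₁ n := by
  obtain ⟨hb, hcirc, hc⟩ := hπ
  refine ⟨fun t ht => hb t (by simp; omega), ?_, ?_⟩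
  · exact (prefix_closed h w₂ n π ⟨hb, hcirc, hc⟩).symm
  · intro s t hs ht hst
    refine hc s t (by simp; omega) (by simp; omega) ?_
    rwa [List.getElem?_append_left hs, List.getElem?_append_left ht]

lemma piStar_suffix {w₁ w₂ : List ℕ} (h : DoubleReduces w₁) {n : ℕ} {π : ℕ → ℕ}
    (hπ : π ∈ PiStar (w₁ ++ w₂) n) : (fun t => π (w₁.length + t)) ∈ PiStar w₂ n := by
  obtain ⟨hb, hcirc, hc⟩ := hπ
  have hlen : (w₁ ++ w₂).length = w₁.length + w₂.length := by simp
  refine ⟨fun t ht => hb _ (by omega), ?_, ?_⟩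
  · show π (w₁.length + 0) = π (w₁.length + w₂.length)
    rw [Nat.add_zero, prefix_closed h w₂ n π ⟨hb, hcirc, hc⟩, hcirc, hlen]
  · intro s t hs ht hst
    have e1 : ∀ s', w₁.length + s' + 1 = w₁.length + (s' + 1) := by omega
    show wignerLink (π (w₁.length + s)) (π (w₁.length + (s+1))) =
      wignerLink (π (w₁.length + t)) (π (w₁.length + (t+1)))
    rw [← e1, ← e1]
    refine hc _ _ (by omega) (by omega) ?_
    rw [List.getElem?_append_right (by omega), List.getElem?_append_right (by omega)]
    simpa using hst



lemma pairMatched_del {u v : List ℕ} {a : ℕ} (h : PairMatchedWord (u ++ a :: a :: v)) :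
    PairMatchedWord (u ++ v) ∧ a ∉ (u ++ v) := by
  have ha : (u ++ a :: a :: v).count a = 2 := h a (by simp)
  have hcnt : ∀ b, (u ++ a :: a :: v).count b =
      (u ++ v).count b + (if b = a then 2 else 0) := by
    intro b
    rcases eq_or_ne b a with rfl | hba
    · simp [List.count_append, List.count_cons]; omega
    · simp [List.count_append, List.count_cons, hba, Ne.symm hba]
  have hna : a ∉ (u ++ v) := by
    intro hmem
    have := hcnt a
    rw [ha, if_pos rfl] at this
    have : (u ++ v).count a = 0 := by omega
    exact (List.count_eq_zero.mp this) hmem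
  refine ⟨?_, hna⟩
  intro b hb
  have hba : b ≠ a := fun hba => hna (hba ▸ hb)
  have hbm : b ∈ (u ++ a :: a :: v) := by
    simp only [List.mem_append] at hb ⊢
    rcases hb with h1 | h1
    · exact Or.inl h1
    · exact Or.inr (by simp [h1])
  have := hcnt b
  rw [h b hbm, if_neg hba] at this
  omega

/-- inserting a double letter into a circuit, with fresh value n+1 at the new vertex -/
def insCirc (p n : ℕ) (π : ℕ → ℕ) : ℕ → ℕ :=
  fun t => if t ≤ p then π t else if t = p + 1 then n + 1 else π (t - 2)

section ins

variable {u v : List ℕ} {a n : ℕ} {π : ℕ → ℕ}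

lemma get?_ins_a₀ : (u ++ a :: a :: v)[u.length]? = some a := by
  rw [List.getElem?_append_right (le_refl _)]; simp

lemma get?_ins_a₁ : (u ++ a :: a :: v)[(u.length + 1)]? = some a := by
  rw [List.getElem?_append_right (by omega)]
  have : u.length + 1 - u.length = 1 := by omega
  rw [this]; rfl

lemma get?_ins_other {t : ℕ} (ht : t < u.length + 2 + v.length) (h1 : t ≠ u.length)
    (h2 : t ≠ u.length + 1) :
    (u ++ a :: a :: v)[t]? = (u ++ v)[(if t < u.length then t else t - 2)]? ∧
      (if t < u.length then t else t - 2) < (u ++ v).length := by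
  by_cases h : t < u.length
  · rw [if_pos h, List.getElem?_append_left h, List.getElem?_append_left h]
    refine ⟨rfl, by simp; omega⟩
  · rw [if_neg h]
    constructor
    · rw [List.getElem?_append_right (by omega), List.getElem?_append_right (by omega : u.length ≤ t - 2)]
      have e1 : t - u.length = (t - 2 - u.length) + 2 := by omega
      rw [e1]; rfl
    · simp; omega

lemma exists_sep {w : List ℕ} (hd : DoubleReduces w) :
    PairMatchedWord w → ∃ (n : ℕ) (π : ℕ → ℕ), π ∈ PiStar w n ∧
      ∀ i ∈ genVertices w, ∀ j ∈ genVertices w, π i = π j → i = j := by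
  induction hd with
  | nil =>
    intro _
    refine ⟨1, fun _ => 1, ⟨fun t _ => by simp, rfl, fun s t hs _ _ => rfl⟩, ?_⟩
    intro i hi j hj _
    have h1 := mem_genVertices_le hi
    have h2 := mem_genVertices_le hj
    simp at h1 h2
    omega
  | step u v a hd ih =>
    intro hp
    obtain ⟨hp', hna⟩ := pairMatched_del hp
    obtain ⟨n, π, hπ, hinj⟩ := ih hp'
    obtain ⟨hb, hcirc, hc⟩ := hπ
    set p := u.length with hp_def
    set π₂ := insCirc p n π with hπ₂_def
    have hlenS : (u ++ v).length = p + v.length := by simp [hp_def]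
    have hlenL : (u ++ a :: a :: v).length = p + 2 + v.length := by simp; omega
    have hval_le : ∀ t ≤ p, π₂ t = π t := fun t ht => by
      simp only [hπ₂_def, insCirc, if_pos ht]
    have hval_mid : π₂ (p + 1) = n + 1 := by
      simp [hπ₂_def, insCirc]
    have hval_ge : ∀ t, p + 2 ≤ t → π₂ t = π (t - 2) := fun t ht => by
      simp only [hπ₂_def, insCirc]; rw [if_neg (by omega), if_neg (by omega)]
    have hπbound : ∀ t ≤ (u ++ v).length, π t ≤ n := by
      intro t ht
      have := hb t ht
      simp only [Finset.mem_Icc] at this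
      omega
    have hget_ne : ∀ s : ℕ, (u ++ v)[s]? ≠ some a := by
      intro s hcontra
      exact hna (List.mem_of_getElem? hcontra)
    refine ⟨n + 1, π₂, ⟨?_, ?_, ?_⟩, ?_⟩
    · intro t ht
      rw [hlenL] at ht
      simp only [Finset.mem_Icc]
      by_cases h1 : t ≤ p
      · rw [hval_le t h1]
        have := hb t (by omega)
        simp only [Finset.mem_Icc] at this; omega
      · by_cases h2 : t = p + 1
        · rw [h2, hval_mid]; omega
        · rw [hval_ge t (by omega)]
          have := hb (t - 2) (by omega)
          simp only [Finset.mem_Icc] at this; omega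
    · rw [hval_le 0 (Nat.zero_le _), hlenL, hval_ge _ (by omega)]
      have : p + 2 + v.length - 2 = p + v.length := by omega
      rw [this, ← hlenS, ← hcirc]
    · intro s t hs ht hst
      rw [hlenL] at hs ht
      by_cases hsa : s = p ∨ s = p + 1
      · -- letter at s is a
        have hta : t = p ∨ t = p + 1 := by
          by_contra hta
          push_neg at hta
          obtain ⟨hg, _⟩ := get?_ins_other (a := a) ht hta.1 hta.2
          have hsv : (u ++ a :: a :: v)[s]? = some a := by
            rcases hsa with rfl | rfl
            · exact get?_ins_a₀
            · exact get?_ins_a₁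
          rw [hsv, hg] at hst
          exact hget_ne _ hst.symm
        -- both edges are {π p, n+1}
        have hE : ∀ r, r = p ∨ r = p + 1 →
            wignerLink (π₂ r) (π₂ (r + 1)) = wignerLink (π p) (n + 1) := by
          intro r hr
          rcases hr with rfl | rfl
          · rw [hval_le p (le_refl _), hval_mid]
          · rw [hval_mid, hval_ge (p + 1 + 1) (by omega)]
            have : p + 1 + 1 - 2 = p := by omega
            rw [this, wignerLink_comm]
        rw [hE s hsa, hE t hta]
      · push_neg at hsa
        have hta : ¬(t = p ∨ t = p + 1) := by
          intro hta
          obtain ⟨hg, _⟩ := get?_ins_other (a := a) hs hsa.1 hsa.2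
          have htv : (u ++ a :: a :: v)[t]? = some a := by
            rcases hta with rfl | rfl
            · exact get?_ins_a₀
            · exact get?_ins_a₁
          rw [htv, hg] at hst
          exact hget_ne _ hst
        push_neg at hta
        obtain ⟨hgs, hgs'⟩ := get?_ins_other (a := a) hs hsa.1 hsa.2
        obtain ⟨hgt, hgt'⟩ := get?_ins_other (a := a) ht hta.1 hta.2
        have hedge : ∀ s', s' < p + 2 + v.length → s' ≠ p → s' ≠ p + 1 →
            wignerLink (π₂ s') (π₂ (s' + 1)) =
            wignerLink (π (if s' < p then s' else s' - 2))
              (π ((if s' < p then s' else s' - 2) + 1)) := by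
          intro s' hs' h1 h2
          by_cases h : s' < p
          · rw [if_pos h, hval_le s' (by omega), hval_le (s' + 1) (by omega)]
          · rw [if_neg h, hval_ge s' (by omega), hval_ge (s' + 1) (by omega)]
            have : s' + 1 - 2 = s' - 2 + 1 := by omega
            rw [this]
        rw [hedge s hs hsa.1 hsa.2, hedge t ht hta.1 hta.2]
        exact hc _ _ hgs' hgt' (by rw [← hgs, ← hgt]; exact hst)
    · intro i hi j hj heq
      -- characterization of generating vertices of the long word
      have hchar : ∀ r ∈ genVertices (u ++ a :: a :: v),
          (r ≤ p ∧ r ∈ genVertices (u ++ v)) ∨ r = p + 1 ∨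
          (p + 3 ≤ r ∧ r - 2 ∈ genVertices (u ++ v)) := by
        intro r hr
        rw [mem_genVertices_iff] at hr
        rcases hr with rfl | ⟨h1, h2, h3⟩
        · exact Or.inl ⟨Nat.zero_le _, zero_mem_genVertices _⟩
        · rw [hlenL] at h2
          set t := r - 1 with ht_def
          by_cases hlt : t < p
          · refine Or.inl ⟨by omega, ?_⟩
            rw [mem_genVertices_iff]
            refine Or.inr ⟨h1, by omega, ?_⟩
            intro s hs
            have e1 : r - 1 = t := rfl
            obtain ⟨hgt, _⟩ := get?_ins_other (u := u) (v := v) (a := a) (t := t) (by omega) (by omega) (by omega)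
            obtain ⟨hgs, _⟩ := get?_ins_other (u := u) (v := v) (a := a) (t := s) (by omega) (by omega) (by omega)
            rw [if_pos hlt] at hgt
            rw [if_pos (by omega)] at hgs
            rw [← hgs, ← hgt]
            exact h3 s (by omega)
          · by_cases heqp : t = p
            · exact Or.inr (Or.inl (by omega))
            · by_cases heqp1 : t = p + 1
              · exfalso
                have := h3 p (by omega)
                rw [heqp1] at this
                exact this (get?_ins_a₀.trans get?_ins_a₁.symm)
              · refine Or.inr (Or.inr ⟨by omega, ?_⟩)
                rw [mem_genVertices_iff]
                refine Or.inr ⟨by omega, by rw [hlenS]; omega, ?_⟩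
                intro s hs
                have e2 : r - 2 - 1 = t - 2 := by omega
                rw [e2]
                obtain ⟨hgt, _⟩ := get?_ins_other (u := u) (v := v) (a := a) (t := t) (by omega) heqp heqp1
                rw [if_neg hlt] at hgt
                by_cases hsp : s < p
                · obtain ⟨hgs, _⟩ := get?_ins_other (u := u) (v := v) (a := a) (t := s) (by omega) (by omega) (by omega)
                  rw [if_pos hsp] at hgs
                  rw [← hgs, ← hgt]
                  exact h3 s (by omega)
                · obtain ⟨hgs, _⟩ := get?_ins_other (u := u) (v := v) (a := a) (t := s + 2) (by omega) (by omega) (by omega)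
                  rw [if_neg (by omega)] at hgs
                  have e3 : s + 2 - 2 = s := by omega
                  rw [e3] at hgs
                  rw [← hgs, ← hgt]
                  exact h3 (s + 2) (by omega)
      have hbnd : ∀ r ∈ genVertices (u ++ v), π r ≤ n :=
        fun r hr => hπbound r (mem_genVertices_le hr)
      rcases hchar i hi with ⟨hi1, hi2⟩ | rfl | ⟨hi1, hi2⟩ <;>
        rcases hchar j hj with ⟨hj1, hj2⟩ | rfl | ⟨hj1, hj2⟩
      · rw [hval_le i hi1, hval_le j hj1] at heq
        exact hinj i hi2 j hj2 heq
      · rw [hval_le i hi1, hval_mid] at heq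
        exact absurd heq (by have := hbnd i hi2; omega)
      · rw [hval_le i hi1, hval_ge j (by omega)] at heq
        have := hinj i hi2 (j - 2) hj2 heq
        omega
      · rw [hval_mid, hval_le j hj1] at heq
        exact absurd heq.symm (by have := hbnd j hj2; omega)
      · rfl
      · rw [hval_mid, hval_ge j (by omega)] at heq
        exact absurd heq.symm (by have := hbnd (j - 2) hj2; omega)
      · rw [hval_ge i (by omega), hval_le j hj1] at heq
        have := hinj (i - 2) hi2 j hj2 heq
        omega
      · rw [hval_ge i (by omega), hval_mid] at heq
        exact absurd heq (by have := hbnd (i - 2) hi2; omega)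
      · rw [hval_ge i (by omega), hval_ge j (by omega)] at heq
        have := hinj (i - 2) hi2 (j - 2) hj2 heq
        omega

end ins

lemma phi_unique {w : List ℕ} {φ : ℕ → ℕ} (hφ : IsPhi w φ) (hp : PairMatchedWord w)
    (hd : DoubleReduces w) {j g : ℕ} (hj : j ≤ w.length) (hg : g ∈ genVertices w)
    (hval : ∀ (n : ℕ) (π : ℕ → ℕ), π ∈ PiStar w n → π j = π g) : φ j = g := by
  obtain ⟨n, π, hπ, hinj⟩ := exists_sep hd hp
  obtain ⟨h1, _, h3⟩ := hφ j hj
  exact hinj _ h1 _ hg ((h3 n π hπ).symm.trans (hval n π hπ))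



section split

variable {w₁ w₂ : List ℕ}

lemma letters_disjoint (hp : PairMatchedWord (w₁ ++ w₂)) (hp₁ : PairMatchedWord w₁) :
    ∀ b ∈ w₁, b ∉ w₂ := by
  intro b hb hb2
  have h1 : (w₁ ++ w₂).count b = 2 := hp b (by simp [hb])
  have h2 : w₁.count b = 2 := hp₁ b hb
  have h3 : w₂.count b ≠ 0 := fun h => (List.count_eq_zero.mp h) hb2
  rw [List.count_append] at h1
  omega

lemma get?_some_mem {l : List ℕ} {s : ℕ} (hs : s < l.length) :
    ∃ b, l[s]? = some b ∧ b ∈ l :=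
  ⟨l[s], List.getElem?_eq_getElem hs, List.getElem_mem hs⟩

lemma gen_prefix {j : ℕ} (hj : j ∈ genVertices w₁) : j ∈ genVertices (w₁ ++ w₂) := by
  rw [mem_genVertices_iff] at hj ⊢
  rcases hj with rfl | ⟨h1, h2, h3⟩
  · exact Or.inl rfl
  · refine Or.inr ⟨h1, by simp; omega, ?_⟩
    intro s hs
    rw [List.getElem?_append_left (by omega), List.getElem?_append_left (by omega)]
    exact h3 s hs

lemma gen_suffix (hdisj : ∀ b ∈ w₁, b ∉ w₂) {j : ℕ} (hj : j ∈ genVertices w₂)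
    (hj0 : j ≠ 0) : w₁.length + j ∈ genVertices (w₁ ++ w₂) := by
  rw [mem_genVertices_iff] at hj ⊢
  rcases hj with rfl | ⟨h1, h2, h3⟩
  · omega
  · refine Or.inr ⟨by omega, by simp; omega, ?_⟩
    intro s hs
    have e1 : w₁.length + j - 1 = w₁.length + (j - 1) := by omega
    have hr : (w₁ ++ w₂)[(w₁.length + (j - 1))]? = w₂[(j - 1)]? := by
      rw [List.getElem?_append_right (by omega)]
      congr 1
      omega
    rw [e1, hr]
    by_cases hsm : s < w₁.length
    · rw [List.getElem?_append_left hsm]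
      obtain ⟨b, hb, hbm⟩ := get?_some_mem (l := w₁) hsm
      obtain ⟨c, hc, hcm⟩ := get?_some_mem (l := w₂) h2
      rw [hb, hc]
      intro hbc
      exact hdisj b hbm (by rw [show b = c from by injection hbc]; exact hcm)
    · rw [List.getElem?_append_right (by omega)]
      exact h3 (s - w₁.length) (by omega)

lemma gen_split (hdisj : ∀ b ∈ w₁, b ∉ w₂) {j : ℕ} (hj : j ∈ genVertices (w₁ ++ w₂))
    (hj0 : j ≠ 0) :
    (j ∈ genVertices w₁ ∧ 1 ≤ j ∧ j ≤ w₁.length) ∨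
      (∃ i, i ∈ genVertices w₂ ∧ i ≠ 0 ∧ j = w₁.length + i) := by
  rw [mem_genVertices_iff] at hj
  rcases hj with rfl | ⟨h1, h2, h3⟩
  · omega
  · simp only [List.length_append] at h2
    by_cases hlt : j - 1 < w₁.length
    · refine Or.inl ⟨?_, h1, by omega⟩
      rw [mem_genVertices_iff]
      refine Or.inr ⟨h1, hlt, ?_⟩
      intro s hs
      have := h3 s hs
      rwa [List.getElem?_append_left (by omega), List.getElem?_append_left (by omega)] at this
    · refine Or.inr ⟨j - 1 - w₁.length + 1, ?_, by omega, by omega⟩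
      rw [mem_genVertices_iff]
      refine Or.inr ⟨by omega, by omega, ?_⟩
      intro s hs
      have e1 : j - 1 - w₁.length + 1 - 1 = j - 1 - w₁.length := by omega
      rw [e1]
      have h5 := h3 (w₁.length + s) (by omega)
      rw [List.getElem?_append_right (by omega), List.getElem?_append_right (by omega)] at h5
      have e3 : w₁.length + s - w₁.length = s := by omega
      rwa [e3] at h5

lemma phi_eq_left {φ φ₁ : ℕ → ℕ} (hp : PairMatchedWord (w₁ ++ w₂))
    (hd : DoubleReduces (w₁ ++ w₂)) (hd₁ : DoubleReduces w₁)
    (hφ : IsPhi (w₁ ++ w₂) φ) (hφ₁ : IsPhi w₁ φ₁) {j : ℕ} (hj : j ≤ w₁.length) :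
    φ j = φ₁ j := by
  refine phi_unique hφ hp hd (by simp; omega) (gen_prefix (hφ₁ j hj).1) ?_
  intro n π hπ
  exact (hφ₁ j hj).2.2 n π (piStar_prefix hd₁ hπ)

lemma phi_eq_right {φ φ₂ : ℕ → ℕ} (hp : PairMatchedWord (w₁ ++ w₂))
    (hp₁ : PairMatchedWord w₁)
    (hd : DoubleReduces (w₁ ++ w₂)) (hd₁ : DoubleReduces w₁)
    (hφ : IsPhi (w₁ ++ w₂) φ) (hφ₂ : IsPhi w₂ φ₂) {j : ℕ} (hj : j ≤ w₂.length) :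
    φ (w₁.length + j) = if φ₂ j = 0 then 0 else w₁.length + φ₂ j := by
  have hdisj := letters_disjoint hp hp₁
  obtain ⟨hg2, -, hval2⟩ := hφ₂ j hj
  have hjtot : w₁.length + j ≤ (w₁ ++ w₂).length := by simp; omega
  have hkey : ∀ (n : ℕ) (π : ℕ → ℕ), π ∈ PiStar (w₁ ++ w₂) n →
      π (w₁.length + j) = π (w₁.length + φ₂ j) := by
    intro n π hπ
    exact hval2 n _ (piStar_suffix hd₁ hπ)
  by_cases h0 : φ₂ j = 0
  · rw [if_pos h0]
    refine phi_unique hφ hp hd hjtot (zero_mem_genVertices _) ?_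
    intro n π hπ
    rw [hkey n π hπ, h0, Nat.add_zero]
    exact prefix_closed hd₁ w₂ n π hπ
  · rw [if_neg h0]
    exact phi_unique hφ hp hd hjtot (gen_suffix hdisj hg2 h0) (hkey)

end split

end Stmt12Aux

/-- Extend a vector indexed by the nonzero generating vertices to all of `ℕ`,
using the value `x` at the vertex `0`. -/
def extVal (w : List ℕ) (x : ℝ) (v : ↥((genVertices w).erase 0) → ℝ) (j : ℕ) : ℝ :=
  if h : j ∈ (genVertices w).erase 0 then v ⟨j, h⟩ else x

/-- `Q_w(x)`: the result of integrating out all the variables except `v₀ = x`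
in the volume integral `∫_{[0,1]^{k+1}} 1{v_{φ(i-1)} + v_{φ(i)} ≤ 1, i ∈ S∖{0}} dv_S`,
i.e. the volume of the slice at `v₀ = x` (so that `p_u(w) = ∫₀¹ Q_w(v₀) dv₀`). -/
noncomputable def Qword (w : List ℕ) (φ : ℕ → ℕ) (x : ℝ) : ℝ :=
  (volume {v : ↥((genVertices w).erase 0) → ℝ |
    (∀ i, v i ∈ Set.Icc (0:ℝ) 1) ∧
    ∀ i ∈ genVertices w, i ≠ 0 →
      extVal w x v (φ (i - 1)) + extVal w x v (φ i) ≤ 1}).toReal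

/-- If the Catalan word `w` factors as `w = w₁ w₂` with `w₁, w₂` Catalan, then
`Q_w(x) = Q_{w₁}(x) · Q_{w₂}(x)`. -/
theorem stmt12 (k : ℕ) (w w₁ w₂ : List ℕ) (hw : w = w₁ ++ w₂)
    (hlen : w.length = 2 * k)
    (hcat : IsCatalanWord w) (hcat₁ : IsCatalanWord w₁) (hcat₂ : IsCatalanWord w₂)
    (φ φ₁ φ₂ : ℕ → ℕ) (hφ : IsPhi w φ) (hφ₁ : IsPhi w₁ φ₁) (hφ₂ : IsPhi w₂ φ₂)
    (x : ℝ) (hx : x ∈ Set.Icc (0:ℝ) 1) :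
    Qword w φ x = Qword w₁ φ₁ x * Qword w₂ φ₂ x := by
  subst hw
  clear hlen
  open Stmt12Aux in
  obtain ⟨hp, hd⟩ := hcat
  obtain ⟨hp₁, hd₁⟩ := hcat₁
  obtain ⟨hp₂, hd₂⟩ := hcat₂
  have hdisj := Stmt12Aux.letters_disjoint hp hp₁
  set m := w₁.length with hm_def
  set V : Finset ℕ := (genVertices (w₁ ++ w₂)).erase 0 with hV_def
  set V₁ : Finset ℕ := (genVertices w₁).erase 0 with hV₁_def
  set V₂ : Finset ℕ := (genVertices w₂).erase 0 with hV₂_def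
  -- membership facts
  have hmemV₁ : ∀ j ∈ V₁, j ∈ V := by
    intro j hj
    rw [hV₁_def, Finset.mem_erase] at hj
    rw [hV_def, Finset.mem_erase]
    exact ⟨hj.1, Stmt12Aux.gen_prefix hj.2⟩
  have hmemV₂ : ∀ j ∈ V₂, m + j ∈ V := by
    intro j hj
    rw [hV₂_def, Finset.mem_erase] at hj
    rw [hV_def, Finset.mem_erase]
    exact ⟨by omega, Stmt12Aux.gen_suffix hdisj hj.2 hj.1⟩
  have hV₁le : ∀ j ∈ V₁, 1 ≤ j ∧ j ≤ m := by
    intro j hj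
    rw [hV₁_def, Finset.mem_erase] at hj
    have := Stmt12Aux.mem_genVertices_le hj.2
    omega
  have hV₂le : ∀ j ∈ V₂, 1 ≤ j ∧ j ≤ w₂.length := by
    intro j hj
    rw [hV₂_def, Finset.mem_erase] at hj
    have := Stmt12Aux.mem_genVertices_le hj.2
    omega
  have hsplit : ∀ j ∈ V, j ∉ V₁ → ∃ i ∈ V₂, j = m + i := by
    intro j hj hj1
    rw [hV_def, Finset.mem_erase] at hj
    rcases Stmt12Aux.gen_split hdisj hj.2 hj.1 with ⟨h1, h2, h3⟩ | ⟨i, hi, hi0, rfl⟩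
    · exact absurd (by rw [hV₁_def, Finset.mem_erase]; exact ⟨by omega, h1⟩) hj1
    · exact ⟨i, by rw [hV₂_def, Finset.mem_erase]; exact ⟨hi0, hi⟩, rfl⟩
  -- the index equivalence
  have hnotV₁ : ∀ (i : ℕ), i ∈ V₂ → m + i ∉ V₁ := by
    intro i hi h
    have := hV₁le _ h
    have := hV₂le _ hi
    omega
  let e : (↥V₁ ⊕ ↥V₂) ≃ ↥V :=
    { toFun := Sum.elim (fun i => ⟨i.1, hmemV₁ _ i.2⟩) (fun i => ⟨m + i.1, hmemV₂ _ i.2⟩)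
      invFun := fun j => if h : (j : ℕ) ∈ V₁ then Sum.inl ⟨j, h⟩ else
        Sum.inr ⟨(j : ℕ) - m, by
          obtain ⟨i, hi, hji⟩ := hsplit j j.2 h
          have : (j : ℕ) - m = i := by omega
          rw [this]; exact hi⟩
      left_inv := by
        rintro (i | i)
        · simp only [Sum.elim_inl]
          exact dif_pos i.2
        · simp only [Sum.elim_inr]
          refine (dif_neg (hnotV₁ i.1 i.2)).trans ?_
          congr 1
          exact Subtype.ext (by simp)
      right_inv := by
        intro j
        dsimp only
        by_cases h : (j : ℕ) ∈ V₁
        · rw [dif_pos h]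
          exact Subtype.ext rfl
        · rw [dif_neg h]
          obtain ⟨i, hi, hji⟩ := hsplit j j.2 h
          simp only [Sum.elim_inr]
          exact Subtype.ext (by simp only; omega) }
  -- the measure-preserving map
  let Φ : ((↥V₁ → ℝ) × (↥V₂ → ℝ)) → (↥V → ℝ) :=
    fun q => (MeasurableEquiv.piCongrLeft (fun _ : ↥V => ℝ) e)
      ((MeasurableEquiv.sumPiEquivProdPi (fun _ : ↥V₁ ⊕ ↥V₂ => ℝ)).symm q)
  have hΦmp : MeasurePreserving Φ volume volume :=
    (volume_measurePreserving_piCongrLeft (fun _ : ↥V => ℝ) e).comp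
      (volume_measurePreserving_sumPiEquivProdPi_symm (fun _ : ↥V₁ ⊕ ↥V₂ => ℝ))
  have hΦ₁ : ∀ (q : (↥V₁ → ℝ) × (↥V₂ → ℝ)) (i : ↥V₁), Φ q (e (Sum.inl i)) = q.1 i := by
    intro q i
    show (MeasurableEquiv.piCongrLeft (fun _ : ↥V => ℝ) e)
      ((MeasurableEquiv.sumPiEquivProdPi (fun _ : ↥V₁ ⊕ ↥V₂ => ℝ)).symm q) (e (Sum.inl i)) = q.1 i
    rw [MeasurableEquiv.coe_piCongrLeft, MeasurableEquiv.coe_sumPiEquivProdPi_symm]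
    exact Equiv.piCongrLeft_sumInl (fun _ : ↥V => ℝ) e q.1 q.2 i
  have hΦ₂ : ∀ (q : (↥V₁ → ℝ) × (↥V₂ → ℝ)) (i : ↥V₂), Φ q (e (Sum.inr i)) = q.2 i := by
    intro q i
    show (MeasurableEquiv.piCongrLeft (fun _ : ↥V => ℝ) e)
      ((MeasurableEquiv.sumPiEquivProdPi (fun _ : ↥V₁ ⊕ ↥V₂ => ℝ)).symm q) (e (Sum.inr i)) = q.2 i
    rw [MeasurableEquiv.coe_piCongrLeft, MeasurableEquiv.coe_sumPiEquivProdPi_symm]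
    exact Equiv.piCongrLeft_sumInr (fun _ : ↥V => ℝ) e q.1 q.2 i
  -- extVal transfer
  have hext₁ : ∀ (q : (↥V₁ → ℝ) × (↥V₂ → ℝ)) (g : ℕ), g ∈ genVertices w₁ →
      extVal (w₁ ++ w₂) x (Φ q) g = extVal w₁ x q.1 g := by
    intro q g hg
    by_cases h0 : g = 0
    · subst h0
      unfold extVal
      rw [dif_neg (Finset.notMem_erase _ _), dif_neg (Finset.notMem_erase _ _)]
    · have h1 : g ∈ V₁ := by rw [hV₁_def, Finset.mem_erase]; exact ⟨h0, hg⟩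
      have h2 : g ∈ V := hmemV₁ g h1
      unfold extVal
      rw [dif_pos h2, dif_pos h1]
      have he : (⟨g, h2⟩ : ↥V) = e (Sum.inl ⟨g, h1⟩) := Subtype.ext rfl
      rw [he, hΦ₁]
  have hext₂ : ∀ (q : (↥V₁ → ℝ) × (↥V₂ → ℝ)) (g : ℕ), g ∈ genVertices w₂ →
      extVal (w₁ ++ w₂) x (Φ q) (if g = 0 then 0 else m + g) = extVal w₂ x q.2 g := by
    intro q g hg
    by_cases h0 : g = 0
    · subst h0
      rw [if_pos rfl]
      unfold extVal
      rw [dif_neg (Finset.notMem_erase _ _), dif_neg (Finset.notMem_erase _ _)]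
    · rw [if_neg h0]
      have h1 : g ∈ V₂ := by rw [hV₂_def, Finset.mem_erase]; exact ⟨h0, hg⟩
      have h2 : m + g ∈ V := hmemV₂ g h1
      unfold extVal
      rw [dif_pos h2, dif_pos h1]
      have he : (⟨m + g, h2⟩ : ↥V) = e (Sum.inr ⟨g, h1⟩) := Subtype.ext rfl
      rw [he, hΦ₂]
  -- φ computation
  have hP1 : ∀ j ≤ m, φ j = φ₁ j := fun j hj =>
    Stmt12Aux.phi_eq_left hp hd hd₁ hφ hφ₁ hj
  have hP2 : ∀ j ≤ w₂.length, φ (m + j) = if φ₂ j = 0 then 0 else m + φ₂ j := fun j hj =>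
    Stmt12Aux.phi_eq_right hp hp₁ hd hd₁ hφ hφ₂ hj
  -- constraint transfer
  have hCon₁ : ∀ (q : (↥V₁ → ℝ) × (↥V₂ → ℝ)) (i : ℕ), i ∈ genVertices w₁ → i ≠ 0 →
      extVal (w₁ ++ w₂) x (Φ q) (φ (i - 1)) + extVal (w₁ ++ w₂) x (Φ q) (φ i)
        = extVal w₁ x q.1 (φ₁ (i - 1)) + extVal w₁ x q.1 (φ₁ i) := by
    intro q i hi hi0
    have him : i ≤ m := Stmt12Aux.mem_genVertices_le hi
    rw [hP1 (i - 1) (by omega), hP1 i him,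
      hext₁ q _ (hφ₁ (i - 1) (by omega)).1, hext₁ q _ (hφ₁ i him).1]
  have hCon₂ : ∀ (q : (↥V₁ → ℝ) × (↥V₂ → ℝ)) (i : ℕ), i ∈ genVertices w₂ → i ≠ 0 →
      extVal (w₁ ++ w₂) x (Φ q) (φ (m + i - 1)) + extVal (w₁ ++ w₂) x (Φ q) (φ (m + i))
        = extVal w₂ x q.2 (φ₂ (i - 1)) + extVal w₂ x q.2 (φ₂ i) := by
    intro q i hi hi0
    have him : i ≤ w₂.length := Stmt12Aux.mem_genVertices_le hi
    have e1 : m + i - 1 = m + (i - 1) := by omega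
    rw [e1, hP2 (i - 1) (by omega), hP2 i him,
      hext₂ q _ (hφ₂ (i - 1) (by omega)).1, hext₂ q _ (hφ₂ i him).1]
  -- the three sets
  set A : Set (↥V → ℝ) := {v | (∀ i, v i ∈ Set.Icc (0:ℝ) 1) ∧
    ∀ i ∈ genVertices (w₁ ++ w₂), i ≠ 0 →
      extVal (w₁ ++ w₂) x v (φ (i - 1)) + extVal (w₁ ++ w₂) x v (φ i) ≤ 1} with hA_def
  set A₁ : Set (↥V₁ → ℝ) := {v | (∀ i, v i ∈ Set.Icc (0:ℝ) 1) ∧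
    ∀ i ∈ genVertices w₁, i ≠ 0 →
      extVal w₁ x v (φ₁ (i - 1)) + extVal w₁ x v (φ₁ i) ≤ 1} with hA₁_def
  set A₂ : Set (↥V₂ → ℝ) := {v | (∀ i, v i ∈ Set.Icc (0:ℝ) 1) ∧
    ∀ i ∈ genVertices w₂, i ≠ 0 →
      extVal w₂ x v (φ₂ (i - 1)) + extVal w₂ x v (φ₂ i) ≤ 1} with hA₂_def
  -- preimage identification
  have hpre : Φ ⁻¹' A = A₁ ×ˢ A₂ := by
    ext q
    obtain ⟨v₁, v₂⟩ := q
    simp only [Set.mem_preimage, hA_def, hA₁_def, hA₂_def, Set.mem_setOf_eq, Set.mem_prod]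
    constructor
    · rintro ⟨hbox, hcon⟩
      refine ⟨⟨?_, ?_⟩, ?_, ?_⟩
      · intro i
        have := hbox (e (Sum.inl i))
        rwa [hΦ₁ (v₁, v₂) i] at this
      · intro i hi hi0
        have hiV : i ∈ genVertices (w₁ ++ w₂) := Stmt12Aux.gen_prefix hi
        have h := hcon i hiV hi0
        rwa [hCon₁ (v₁, v₂) i hi hi0] at h
      · intro i
        have := hbox (e (Sum.inr i))
        rwa [hΦ₂ (v₁, v₂) i] at this
      · intro i hi hi0
        have hiV : m + i ∈ genVertices (w₁ ++ w₂) := Stmt12Aux.gen_suffix hdisj hi hi0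
        have h := hcon (m + i) hiV (by omega)
        rwa [hCon₂ (v₁, v₂) i hi hi0] at h
    · rintro ⟨⟨hbox₁, hcon₁⟩, hbox₂, hcon₂⟩
      constructor
      · intro i
        obtain ⟨s, rfl⟩ := e.surjective i
        rcases s with i | i
        · rw [hΦ₁ (v₁, v₂) i]; exact hbox₁ i
        · rw [hΦ₂ (v₁, v₂) i]; exact hbox₂ i
      · intro i hi hi0
        by_cases h1 : i ∈ genVertices w₁
        · rw [hCon₁ (v₁, v₂) i h1 hi0]
          exact hcon₁ i h1 hi0
        · rcases Stmt12Aux.gen_split hdisj hi hi0 with ⟨h2, -⟩ | ⟨i₂, hi₂, hi₂0, rfl⟩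
          · exact absurd h2 h1
          · rw [hCon₂ (v₁, v₂) i₂ hi₂ hi₂0]
            exact hcon₂ i₂ hi₂ hi₂0
  -- measurability of A
  have hA : MeasurableSet A := by
    have hm : ∀ j : ℕ, Measurable (fun v : ↥V → ℝ => extVal (w₁ ++ w₂) x v j) := by
      intro j
      unfold extVal
      by_cases h : j ∈ (genVertices (w₁ ++ w₂)).erase 0
      · simp only [dif_pos h]
        exact measurable_pi_apply _
      · simp only [dif_neg h]
        exact measurable_const
    have hAeq : A = (⋂ i : ↥V, (fun v : ↥V → ℝ => v i) ⁻¹' Set.Icc (0:ℝ) 1) ∩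
        ⋂ i : ℕ, ⋂ (_ : i ∈ genVertices (w₁ ++ w₂)), ⋂ (_ : i ≠ 0),
          {v : ↥V → ℝ | extVal (w₁ ++ w₂) x v (φ (i - 1)) + extVal (w₁ ++ w₂) x v (φ i) ≤ 1} := by
      ext v
      simp only [hA_def, Set.mem_setOf_eq, Set.mem_inter_iff, Set.mem_iInter, Set.mem_preimage]
    rw [hAeq]
    refine MeasurableSet.inter ?_ ?_
    · exact MeasurableSet.iInter fun i => (measurable_pi_apply i) measurableSet_Icc
    · refine MeasurableSet.iInter fun i => MeasurableSet.iInter fun _ =>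
        MeasurableSet.iInter fun _ => ?_
      exact measurableSet_le ((hm _).add (hm _)) measurable_const
  -- conclusion
  show (volume A).toReal = (volume A₁).toReal * (volume A₂).toReal
  rw [← ENNReal.toReal_mul]
  congr 1
  calc volume A = volume (Φ ⁻¹' A) := (hΦmp.measure_preimage hA.nullMeasurableSet).symm
    _ = volume (A₁ ×ˢ A₂) := by rw [hpre]
    _ = volume A₁ * volume A₂ := by
        rw [Measure.volume_eq_prod, Measure.prod_prod]
end

section
/- Let w = a w₁ a be a Catalan word where w₁ is Catalan. Then Q_w(x) = ∫_0^{1-x} Q_{w₁}(y) dy. -/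
open MeasureTheory

lemma pm_step {u v : List ℕ} {a : ℕ} (h : PairMatchedWord (u ++ a :: a :: v)) :
    PairMatchedWord (u ++ v) ∧ a ∉ u ++ v := by
  have ha : a ∉ u ++ v := by
    have := h a (by simp)
    simp [List.count_append, List.count_cons] at this
    simp [List.mem_append]
    constructor <;> intro hm <;>
      [exact absurd (List.count_pos_iff.mpr hm) (by omega);
       exact absurd (List.count_pos_iff.mpr hm) (by omega)]
  refine ⟨fun b hb => ?_, ha⟩
  have hba : b ≠ a := fun e => ha (e ▸ hb)
  have := h b (by simp at hb ⊢; tauto)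
  simp [List.count_append, List.count_cons, hba, Ne.symm hba] at this ⊢
  omega

section getq
variable (u v : List ℕ) (a : ℕ)

lemma getq_lt {s : ℕ} (hs : s < u.length) :
    (u ++ a :: a :: v)[s]? = (u ++ v)[s]? := by
  rw [List.getElem?_append_left hs, List.getElem?_append_left hs]

lemma getq_k : (u ++ a :: a :: v)[u.length]? = some a := by
  rw [List.getElem?_append_right le_rfl]; simp

lemma getq_k1 : (u ++ a :: a :: v)[u.length + 1]? = some a := by
  rw [List.getElem?_append_right (by omega)]; simp

lemma getq_ge {s : ℕ} (hs : u.length + 2 ≤ s) :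
    (u ++ a :: a :: v)[s]? = (u ++ v)[s - 2]? := by
  rw [List.getElem?_append_right (by omega), List.getElem?_append_right (by omega)]
  obtain ⟨r, rfl⟩ : ∃ r, s = u.length + 2 + r := ⟨s - u.length - 2, by omega⟩
  simp [show u.length + 2 + r - u.length = r + 2 by omega,
    show u.length + 2 + r - 2 - u.length = r by omega]

lemma getq_len : (u ++ a :: a :: v).length = (u ++ v).length + 2 := by simp; omega
end getq

lemma fresh_witness {w : List ℕ} (hred : DoubleReduces w) (hpm : PairMatchedWord w) :
    ∃ n π, π ∈ PiStar w n ∧ ∀ t < w.length, (∀ s < t, w[s]? ≠ w[t]?) →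
      ∀ j ≤ t, π (t + 1) ≠ π j := by
  induction hred with
  | nil =>
    exact ⟨1, fun _ => 1, ⟨by simp, rfl, by simp⟩, by simp⟩
  | step u v a hred ih =>
    obtain ⟨hpm', ha⟩ := pm_step hpm
    obtain ⟨n, π', ⟨hrange, hcirc, hlink⟩, hfresh⟩ := ih hpm'
    set k := u.length with hk
    set L := (u ++ v).length with hL
    have hkL : k ≤ L := by simp [hL, hk]
    have hwlen : (u ++ a :: a :: v).length = L + 2 := getq_len u v a
    set π : ℕ → ℕ := fun t => if t ≤ k then π' t else if t = k+1 then n+1 else π' (t-2)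
      with hπ
    have hπlow : ∀ {t}, t ≤ k → π t = π' t := fun h => if_pos h
    have hπmid : π (k+1) = n+1 := by simp [hπ]
    have hπhigh : ∀ {t}, k+2 ≤ t → π t = π' (t-2) := by
      intro t h; simp only [hπ]; rw [if_neg (by omega), if_neg (by omega)]
    have hrange' : ∀ t ≤ L, 1 ≤ π' t ∧ π' t ≤ n := by
      intro t ht; have := hrange t ht; simpa using this
    -- letter and link facts for positions outside {k, k+1}
    have hlet : ∀ s, (s < k ∨ k + 2 ≤ s) →
        (u ++ a :: a :: v)[s]? = (u ++ v)[if s < k then s else s - 2]? := by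
      intro s hs
      rcases hs with h | h
      · rw [if_pos h]; exact getq_lt u v a h
      · rw [if_neg (by omega)]; exact getq_ge u v a h
    have hnota : ∀ s, (s < k ∨ k + 2 ≤ s) → (u ++ a :: a :: v)[s]? ≠ some a := by
      intro s hs hcon
      rw [hlet s hs] at hcon
      exact ha (List.mem_of_getElem? hcon)
    have hlinkval : ∀ s, (s < k ∨ k + 2 ≤ s) →
        wignerLink (π s) (π (s+1)) =
          wignerLink (π' (if s < k then s else s - 2)) (π' ((if s < k then s else s - 2) + 1)) := by
      intro s hs
      rcases hs with h | h
      · rw [if_pos h, hπlow (by omega), hπlow (by omega)]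
      · rw [if_neg (by omega), hπhigh (by omega), hπhigh (by omega)]
        have e : s + 1 - 2 = s - 2 + 1 := by omega
        rw [e]
    refine ⟨n+1, π, ⟨?_, ?_, ?_⟩, ?_⟩
    · -- range
      intro t ht
      rw [hwlen] at ht
      rcases le_or_gt t k with h | h
      · rw [hπlow h]; have := hrange' t (by omega); simp; omega
      · rcases eq_or_lt_of_le (show k + 1 ≤ t by omega) with h2 | h2
        · rw [← h2, hπmid]; simp
        · rw [hπhigh (by omega)]; have := hrange' (t-2) (by omega); simp; omega
    · -- circuit
      rw [hwlen, hπlow (by omega), hπhigh (by omega)]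
      simpa using hcirc
    · -- link condition
      intro s t hs ht hval
      rw [hwlen] at hs ht
      by_cases hsk : s = k ∨ s = k + 1
      · by_cases htk : t = k ∨ t = k + 1
        · -- both are occurrences of a
          have e1 : ∀ r, (r = k ∨ r = k+1) → wignerLink (π r) (π (r+1)) = (min (π' k) (n+1), max (π' k) (n+1)) := by
            intro r hr
            rcases hr with rfl | rfl
            · rw [hπlow le_rfl, hπmid]; rfl
            · rw [hπmid, hπhigh (by omega)]
              have e : k + 1 + 1 - 2 = k := by omega
              rw [e]
              unfold wignerLink
              rw [min_comm, max_comm]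
          rw [e1 s hsk, e1 t htk]
        · exfalso
          have h1 : (u ++ a :: a :: v)[s]? = some a := by
            rcases hsk with rfl | rfl
            exacts [getq_k u v a, getq_k1 u v a]
          exact hnota t (by omega) (hval ▸ h1)
      · by_cases htk : t = k ∨ t = k + 1
        · exfalso
          have h1 : (u ++ a :: a :: v)[t]? = some a := by
            rcases htk with rfl | rfl
            exacts [getq_k u v a, getq_k1 u v a]
          exact hnota s (by omega) (hval.symm ▸ h1)
        · have hs' : s < k ∨ k + 2 ≤ s := by omega
          have ht' : t < k ∨ k + 2 ≤ t := by omega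
          rw [hlinkval s hs', hlinkval t ht']
          apply hlink
          · rcases hs' with h | h
            · rw [if_pos h]; omega
            · rw [if_neg (by omega)]; omega
          · rcases ht' with h | h
            · rw [if_pos h]; omega
            · rw [if_neg (by omega)]; omega
          · rw [← hlet s hs', ← hlet t ht']; exact hval
    · -- freshness
      intro t ht hfirst j hj
      rw [hwlen] at ht
      rcases lt_or_ge t k with h | h
      · -- t < k
        rw [hπlow (by omega), hπlow (by omega)]
        refine hfresh t (by omega) ?_ j hj
        intro s hs
        rw [← getq_lt u v a (show s < k by omega), ← getq_lt u v a h]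
        exact hfirst s hs
      · rcases eq_or_lt_of_le h with rfl | h2
        · -- t = k
          rw [hπmid, hπlow hj]
          have := hrange' j (by omega)
          omega
        · rcases eq_or_lt_of_le (show k + 1 ≤ t by omega) with h3 | h3
          · -- t = k+1 : not a first occurrence
            exfalso
            exact hfirst k (by omega) (by rw [getq_k, ← h3, getq_k1])
          · -- t ≥ k+2
            have htk : k + 2 ≤ t := by omega
            rw [hπhigh (by omega)]
            have e3 : t + 1 - 2 = t - 1 := by omega
            rw [e3]
            have hfirst' : ∀ s < t - 2, (u ++ v)[s]? ≠ (u ++ v)[t - 2]? := by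
              intro s hs
              have hmap : (u ++ v)[s]? = (u ++ a :: a :: v)[if s < k then s else s + 2]? := by
                rcases lt_or_ge s k with hss | hss
                · rw [if_pos hss, getq_lt u v a hss]
                · rw [if_neg (by omega), getq_ge u v a (by omega)]
                  norm_num
              rw [hmap, ← getq_ge u v a htk]
              refine hfirst _ ?_
              split <;> omega
            have hf := hfresh (t - 2) (by omega) hfirst'
            have ht1 : t - 2 + 1 = t - 1 := by omega
            rw [ht1] at hf
            rcases lt_or_ge j (k+1) with hjk | hjk
            · rw [hπlow (by omega)]
              exact hf j (by omega)
            · rcases eq_or_lt_of_le hjk with rfl | hjk2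
              · rw [hπmid]
                have := hrange' (t-1) (by omega)
                omega
              · rw [hπhigh (by omega)]
                exact hf (j - 2) (by omega)

lemma mem_gen_iff {w : List ℕ} {i : ℕ} :
    i ∈ genVertices w ↔ i = 0 ∨
      ∃ t, t < w.length ∧ i = t + 1 ∧ ∀ s < t, w[s]? ≠ w[t]? := by
  simp only [genVertices, Finset.mem_insert, Finset.mem_image, Finset.mem_filter,
    Finset.mem_range]
  constructor
  · rintro (rfl | ⟨t, ⟨ht, hf⟩, rfl⟩)
    · exact Or.inl rfl
    · exact Or.inr ⟨t, ht, rfl, hf⟩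
  · rintro (rfl | ⟨t, ht, rfl, hf⟩)
    · exact Or.inl rfl
    · exact Or.inr ⟨t, ⟨ht, hf⟩, rfl⟩

lemma gen_le_len {w : List ℕ} {i : ℕ} (hi : i ∈ genVertices w) : i ≤ w.length := by
  rw [mem_gen_iff] at hi
  rcases hi with rfl | ⟨t, ht, rfl, _⟩ <;> omega

lemma zero_mem_gen (w : List ℕ) : 0 ∈ genVertices w := mem_gen_iff.mpr (Or.inl rfl)

lemma inj_witness {w : List ℕ} (hcat : IsCatalanWord w) :
    ∃ n π, π ∈ PiStar w n ∧ Set.InjOn π (genVertices w) := by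
  obtain ⟨n, π, hπ, hfresh⟩ := fresh_witness hcat.2 hcat.1
  refine ⟨n, π, hπ, ?_⟩
  intro i hi j hj hij
  rw [Finset.mem_coe, mem_gen_iff] at hi hj
  rcases hi with rfl | ⟨s, hs, rfl, hfs⟩ <;> rcases hj with rfl | ⟨t, ht, rfl, hft⟩
  · rfl
  · exact absurd hij.symm (hfresh t ht hft 0 (by omega))
  · exact absurd hij (hfresh s hs hfs 0 (by omega))
  · rcases lt_trichotomy s t with h | h | h
    · exact absurd hij.symm (hfresh t ht hft (s+1) (by omega))
    · rw [h]
    · exact absurd hij (hfresh s hs hfs (t+1) (by omega))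

section struct
variable {w w₁ : List ℕ} {a : ℕ} (hw : w = a :: (w₁ ++ [a]))
include hw

lemma len_eq : w.length = w₁.length + 2 := by subst hw; simp

lemma getw_zero : w[0]? = some a := by subst hw; rfl

lemma getw_succ {s : ℕ} (hs : s < w₁.length) : w[s + 1]? = w₁[s]? := by
  subst hw
  simp only [List.getElem?_cons_succ]
  exact List.getElem?_append_left hs

lemma getw_last : w[w₁.length + 1]? = some a := by
  subst hw
  simp only [List.getElem?_cons_succ]
  rw [List.getElem?_append_right le_rfl]
  simp

lemma a_not_mem (hpm : PairMatchedWord w) : a ∉ w₁ := by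
  have := hpm a (by subst hw; simp)
  subst hw
  simp [List.count_append, List.count_cons] at this
  intro hm
  exact absurd (List.count_pos_iff.mpr hm) (by omega)

lemma shift_mem_piStar (hpm : PairMatchedWord w) {n : ℕ} {π : ℕ → ℕ}
    (hπ : π ∈ PiStar w n) : (fun t => π (t + 1)) ∈ PiStar w₁ n := by
  obtain ⟨hrange, hcirc, hlink⟩ := hπ
  have hlen : w.length = w₁.length + 2 := len_eq hw
  refine ⟨fun t ht => hrange (t+1) (by omega), ?_, ?_⟩
  · -- π 1 = π (w₁.length + 1)
    have h := hlink 0 (w₁.length + 1) (by omega) (by omega)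
      (by rw [getw_zero hw, getw_last hw])
    rw [show w₁.length + 1 + 1 = w.length by omega, ← hcirc] at h
    simp only [wignerLink, Prod.mk.injEq] at h
    simp only
    omega
  · intro s t hs ht hval
    exact hlink (s+1) (t+1) (by omega) (by omega)
      (by rw [getw_succ hw hs, getw_succ hw ht]; exact hval)

omit hw in
lemma one_mem_gen (hlen : 0 < w.length) : 1 ∈ genVertices w :=
  mem_gen_iff.mpr (Or.inr ⟨0, hlen, rfl, by omega⟩)

lemma gen_shift (hpm : PairMatchedWord w) {m : ℕ} (hm : m ∈ genVertices w₁) :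
    m + 1 ∈ genVertices w := by
  have ha := a_not_mem hw hpm
  rw [mem_gen_iff] at hm
  rcases hm with rfl | ⟨t, ht, rfl, hf⟩
  · exact one_mem_gen (by rw [len_eq hw]; omega)
  · refine mem_gen_iff.mpr (Or.inr ⟨t + 1, by rw [len_eq hw]; omega, rfl, ?_⟩)
    intro s hs
    rw [getw_succ hw ht]
    rcases Nat.eq_zero_or_pos s with rfl | hs0
    · rw [getw_zero hw]
      intro hcon
      exact ha (List.mem_of_getElem? hcon.symm)
    · obtain ⟨s', rfl⟩ : ∃ s', s = s' + 1 := ⟨s - 1, by omega⟩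
      rw [getw_succ hw (by omega)]
      exact hf s' (by omega)

lemma gen_structure (hpm : PairMatchedWord w) :
    genVertices w = insert 0 (insert 1 (((genVertices w₁).erase 0).image (· + 1))) := by
  have ha := a_not_mem hw hpm
  ext i
  simp only [Finset.mem_insert, Finset.mem_image, Finset.mem_erase]
  constructor
  · intro hi
    rw [mem_gen_iff] at hi
    rcases hi with rfl | ⟨t, ht, rfl, hf⟩
    · exact Or.inl rfl
    · rcases Nat.eq_zero_or_pos t with rfl | ht0
      · exact Or.inr (Or.inl rfl)
      · rw [len_eq hw] at ht
        rcases Nat.lt_or_ge t (w₁.length + 1) with ht1 | ht1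
        · refine Or.inr (Or.inr ⟨t, ⟨by omega, ?_⟩, rfl⟩)
          refine mem_gen_iff.mpr (Or.inr ⟨t - 1, by omega, by omega, ?_⟩)
          intro s hs
          rw [← getw_succ hw (by omega), ← getw_succ hw (by omega),
            show t - 1 + 1 = t by omega]
          exact hf (s + 1) (by omega)
        · exfalso
          have : t = w₁.length + 1 := by omega
          subst this
          exact hf 0 (by omega) (by rw [getw_zero hw, getw_last hw])
  · rintro (rfl | rfl | ⟨m, ⟨hm0, hm⟩, rfl⟩)
    · exact zero_mem_gen w
    · exact one_mem_gen (by rw [len_eq hw]; omega)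
    · exact gen_shift hw hpm hm

end struct

lemma phi_gen {w : List ℕ} (hcat : IsCatalanWord w) {φ : ℕ → ℕ} (hφ : IsPhi w φ) :
    ∀ i ∈ genVertices w, φ i = i := by
  obtain ⟨n, π, hπ, hinj⟩ := inj_witness hcat
  intro i hi
  obtain ⟨hg, _, hval⟩ := hφ i (gen_le_len hi)
  exact (hinj (Finset.mem_coe.mpr hg) (Finset.mem_coe.mpr hi) (hval n π hπ).symm)

lemma phi_zero {w : List ℕ} {φ : ℕ → ℕ} (hφ : IsPhi w φ) : φ 0 = 0 :=
  Nat.le_zero.mp (hφ 0 (Nat.zero_le _)).2.1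

lemma phi_shift {w w₁ : List ℕ} {a : ℕ} (hw : w = a :: (w₁ ++ [a]))
    (hcat : IsCatalanWord w) {φ φ₁ : ℕ → ℕ} (hφ : IsPhi w φ) (hφ₁ : IsPhi w₁ φ₁) :
    ∀ j ≤ w₁.length, φ (j + 1) = φ₁ j + 1 := by
  obtain ⟨n, π, hπ, hinj⟩ := inj_witness hcat
  intro j hj
  have hπ' := shift_mem_piStar hw hcat.1 hπ
  obtain ⟨hg1, _, hval1⟩ := hφ₁ j hj
  obtain ⟨hg, _, hval⟩ := hφ (j+1) (by rw [len_eq hw]; omega)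
  have h1 : π (j + 1) = π (φ₁ j + 1) := hval1 n _ hπ'
  have h2 : π (j + 1) = π (φ (j + 1)) := hval n π hπ
  have : φ (j + 1) = φ₁ j + 1 :=
    hinj (Finset.mem_coe.mpr hg) (Finset.mem_coe.mpr (gen_shift hw hcat.1 hg1))
      (h2.symm.trans h1)
  exact this

lemma mem_shift_aux {S S₁ : Finset ℕ} (hS : S = insert 1 (S₁.image (· + 1))) {n : ℕ}
    (hn : n ∈ S) (h : n ≠ 1) : n - 1 ∈ S₁ ∧ 1 ≤ n := by
  subst hS
  rw [Finset.mem_insert] at hn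
  rcases hn with rfl | h2
  · exact absurd rfl h
  · obtain ⟨m, hm, rfl⟩ := Finset.mem_image.mp h2
    simpa using hm

def shiftEquiv (S S₁ : Finset ℕ) (hS : S = insert 1 (S₁.image (· + 1))) (h0 : 0 ∉ S₁) :
    Unit ⊕ ↥S₁ ≃ ↥S where
  toFun := Sum.elim (fun _ => ⟨1, by rw [hS]; exact Finset.mem_insert_self _ _⟩)
    (fun m => ⟨(m:ℕ)+1, by
      rw [hS]; exact Finset.mem_insert_of_mem (Finset.mem_image_of_mem _ m.2)⟩)
  invFun := fun i => if h : (i:ℕ) = 1 then Sum.inl () else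
    Sum.inr ⟨(i:ℕ)-1, (mem_shift_aux hS i.2 h).1⟩
  left_inv := by
    rintro (⟨⟩ | m)
    · dsimp only [Sum.elim_inl]
      rw [dif_pos rfl]
    · have hm0 : (m:ℕ) ≠ 0 := fun h => h0 (h ▸ m.2)
      dsimp only [Sum.elim_inr]
      rw [dif_neg (by omega)]
      exact congrArg Sum.inr (Subtype.ext (by simp))
  right_inv := by
    intro i
    dsimp only
    by_cases h : (i:ℕ) = 1
    · rw [dif_pos h]
      exact Subtype.ext h.symm
    · rw [dif_neg h]
      have := (mem_shift_aux hS i.2 h).2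
      dsimp only [Sum.elim_inr]
      exact Subtype.ext (by simp; omega)

lemma measurable_extVal (w : List ℕ) (j : ℕ) {α : Type*} [MeasurableSpace α]
    {f : α → ℝ} {g : α → (↥((genVertices w).erase 0) → ℝ)}
    (hf : Measurable f) (hg : Measurable g) :
    Measurable fun p => extVal w (f p) (g p) j := by
  unfold extVal
  by_cases h : j ∈ (genVertices w).erase 0
  · simp only [dif_pos h]
    exact (measurable_pi_apply _).comp hg
  · simp only [dif_neg h]
    exact hf

lemma measurableSet_Q (w : List ℕ) (φ : ℕ → ℕ) {α : Type*} [MeasurableSpace α]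
    {f : α → ℝ} {g : α → (↥((genVertices w).erase 0) → ℝ)}
    (hf : Measurable f) (hg : Measurable g) :
    MeasurableSet {p : α | (∀ i, g p i ∈ Set.Icc (0:ℝ) 1) ∧
      ∀ i ∈ genVertices w, i ≠ 0 →
        extVal w (f p) (g p) (φ (i - 1)) + extVal w (f p) (g p) (φ i) ≤ 1} := by
  have h1 : MeasurableSet {p : α | ∀ i, g p i ∈ Set.Icc (0:ℝ) 1} := by
    have : {p : α | ∀ i, g p i ∈ Set.Icc (0:ℝ) 1} =
        ⋂ i, (fun p => g p i) ⁻¹' Set.Icc (0:ℝ) 1 := by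
      ext p; simp [Set.mem_iInter]
    rw [this]
    exact MeasurableSet.iInter fun i =>
      ((measurable_pi_apply i).comp hg) measurableSet_Icc
  have h2 : MeasurableSet {p : α | ∀ i ∈ genVertices w, i ≠ 0 →
      extVal w (f p) (g p) (φ (i - 1)) + extVal w (f p) (g p) (φ i) ≤ 1} := by
    have : {p : α | ∀ i ∈ genVertices w, i ≠ 0 →
        extVal w (f p) (g p) (φ (i - 1)) + extVal w (f p) (g p) (φ i) ≤ 1} =
        ⋂ (i) (_ : i ∈ genVertices w) (_ : i ≠ 0),
          {p : α | extVal w (f p) (g p) (φ (i - 1)) + extVal w (f p) (g p) (φ i) ≤ 1} := by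
      ext p; simp [Set.mem_iInter]
    rw [this]
    refine MeasurableSet.iInter fun i => MeasurableSet.iInter fun _ =>
      MeasurableSet.iInter fun _ => ?_
    exact measurableSet_le
      ((measurable_extVal w _ hf hg).add (measurable_extVal w _ hf hg)) measurable_const
  have : {p : α | (∀ i, g p i ∈ Set.Icc (0:ℝ) 1) ∧
      ∀ i ∈ genVertices w, i ≠ 0 →
        extVal w (f p) (g p) (φ (i - 1)) + extVal w (f p) (g p) (φ i) ≤ 1} =
      {p : α | ∀ i, g p i ∈ Set.Icc (0:ℝ) 1} ∩
      {p : α | ∀ i ∈ genVertices w, i ≠ 0 →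
        extVal w (f p) (g p) (φ (i - 1)) + extVal w (f p) (g p) (φ i) ≤ 1} := rfl
  rw [this]
  exact h1.inter h2

/-- If `w = a w₁ a` is Catalan with `w₁` Catalan, then
`Q_w(x) = ∫₀^{1-x} Q_{w₁}(y) dy`. -/
theorem stmt13 (w w₁ : List ℕ) (a : ℕ) (hw : w = a :: (w₁ ++ [a]))
    (hcat : IsCatalanWord w) (hcat₁ : IsCatalanWord w₁)
    (φ φ₁ : ℕ → ℕ) (hφ : IsPhi w φ) (hφ₁ : IsPhi w₁ φ₁)
    (x : ℝ) (hx : x ∈ Set.Icc (0:ℝ) 1) :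
    Qword w φ x = ∫ y in (0:ℝ)..(1 - x), Qword w₁ φ₁ y := by
  classical
  obtain ⟨hx0, hx1⟩ := hx
  have hpm := hcat.1
  have hlen : w.length = w₁.length + 2 := len_eq hw
  have hφ0 : φ 0 = 0 := phi_zero hφ
  have hφg : ∀ i ∈ genVertices w, φ i = i := phi_gen hcat hφ
  have hφ₁g : ∀ i ∈ genVertices w₁, φ₁ i = i := phi_gen hcat₁ hφ₁
  have hφs : ∀ j ≤ w₁.length, φ (j + 1) = φ₁ j + 1 := phi_shift hw hcat hφ hφ₁
  have h1g : (1:ℕ) ∈ genVertices w := one_mem_gen (by omega)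
  have hgen : genVertices w = insert 0 (insert 1 (((genVertices w₁).erase 0).image (· + 1))) :=
    gen_structure hw hpm
  have h0T : (0:ℕ) ∉ insert 1 (((genVertices w₁).erase 0).image (· + 1)) := by
    simp only [Finset.mem_insert, Finset.mem_image]
    push_neg
    exact ⟨by omega, fun m _ => by omega⟩
  have hS : (genVertices w).erase 0 = insert 1 (((genVertices w₁).erase 0).image (· + 1)) := by
    rw [hgen, Finset.erase_insert h0T]
  have h0S₁ : (0:ℕ) ∉ (genVertices w₁).erase 0 := Finset.notMem_erase _ _
  have h1S : (1:ℕ) ∈ (genVertices w).erase 0 := by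
    rw [hS]; exact Finset.mem_insert_self _ _
  have hmemS : ∀ m ∈ (genVertices w₁).erase 0, m + 1 ∈ (genVertices w).erase 0 := by
    intro m hm
    rw [hS]
    exact Finset.mem_insert_of_mem (Finset.mem_image_of_mem _ hm)
  set ι := ↥((genVertices w).erase 0) with hι
  set ι₁ := ↥((genVertices w₁).erase 0) with hι₁
  set ε : Unit ⊕ ι₁ ≃ ι := shiftEquiv _ _ hS h0S₁ with hε
  set G : (ℝ × (ι₁ → ℝ)) → (ι → ℝ) := fun p =>
    (MeasurableEquiv.piCongrLeft (fun _ => ℝ) ε)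
      ((MeasurableEquiv.sumPiEquivProdPi (fun _ => ℝ)).symm
        (((MeasurableEquiv.funUnique Unit ℝ).symm.prodCongr (MeasurableEquiv.refl _)) p))
    with hG
  have hGmp : MeasurePreserving G volume volume := by
    refine MeasurePreserving.comp (volume_measurePreserving_piCongrLeft _ ε) ?_
    refine MeasurePreserving.comp (volume_measurePreserving_sumPiEquivProdPi_symm _) ?_
    exact ((volume_preserving_funUnique Unit ℝ).symm _).prod (MeasurePreserving.id _)
  have hG1 : ∀ (y : ℝ) (v₁ : ι₁ → ℝ), G (y, v₁) (ε (Sum.inl ())) = y := by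
    intro y v₁
    exact Equiv.piCongrLeft_sumInl (fun _ => ℝ) ε (fun _ => y) v₁ ()
  have hG2 : ∀ (y : ℝ) (v₁ : ι₁ → ℝ) (m : ι₁), G (y, v₁) (ε (Sum.inr m)) = v₁ m := by
    intro y v₁ m
    exact Equiv.piCongrLeft_sumInr (fun _ => ℝ) ε (fun _ => y) v₁ m
  have hvG1 : ∀ (y : ℝ) (v₁ : ι₁ → ℝ) (h : (1:ℕ) ∈ (genVertices w).erase 0),
      G (y, v₁) ⟨1, h⟩ = y := by
    intro y v₁ h
    have : (⟨1, h⟩ : ι) = ε (Sum.inl ()) := by rw [hε]; rfl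
    rw [this, hG1]
  have hvG2 : ∀ (y : ℝ) (v₁ : ι₁ → ℝ) (m : ℕ) (hm : m ∈ (genVertices w₁).erase 0)
      (h : m + 1 ∈ (genVertices w).erase 0), G (y, v₁) ⟨m + 1, h⟩ = v₁ ⟨m, hm⟩ := by
    intro y v₁ m hm h
    have : (⟨m + 1, h⟩ : ι) = ε (Sum.inr ⟨m, hm⟩) := by rw [hε]; rfl
    rw [this, hG2]
  have hext : ∀ (y : ℝ) (v₁ : ι₁ → ℝ) (m : ℕ), m ∈ genVertices w₁ →
      extVal w x (G (y, v₁)) (m + 1) = extVal w₁ y v₁ m := by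
    intro y v₁ m hm
    by_cases hm0 : m = 0
    · subst hm0
      rw [extVal, extVal, dif_pos h1S, dif_neg h0S₁]
      exact hvG1 y v₁ h1S
    · have hmS₁ : m ∈ (genVertices w₁).erase 0 := Finset.mem_erase.mpr ⟨hm0, hm⟩
      rw [extVal, extVal, dif_pos (hmemS m hmS₁), dif_pos hmS₁]
      exact hvG2 y v₁ m hmS₁ (hmemS m hmS₁)
  have key1 : ∀ (y : ℝ) (v₁ : ι₁ → ℝ),
      extVal w x (G (y, v₁)) (φ (1 - 1)) + extVal w x (G (y, v₁)) (φ 1) = x + y := by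
    intro y v₁
    norm_num [hφ0, hφg 1 h1g]
    rw [extVal, extVal, dif_neg (Finset.notMem_erase _ _), dif_pos h1S, hvG1 y v₁ h1S]
  have key2 : ∀ (y : ℝ) (v₁ : ι₁ → ℝ) (m : ℕ), m ∈ genVertices w₁ → m ≠ 0 →
      extVal w x (G (y, v₁)) (φ (m + 1 - 1)) + extVal w x (G (y, v₁)) (φ (m + 1)) =
        extVal w₁ y v₁ (φ₁ (m - 1)) + extVal w₁ y v₁ (φ₁ m) := by
    intro y v₁ m hm hm0
    have hmlen : m ≤ w₁.length := gen_le_len hm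
    rw [show m + 1 - 1 = (m - 1) + 1 by omega, hφs (m - 1) (by omega),
      hφg (m + 1) (gen_shift hw hpm hm), hφ₁g m hm,
      hext y v₁ (φ₁ (m - 1)) (hφ₁ (m - 1) (by omega)).1, hext y v₁ m hm]
  -- the sets
  unfold Qword
  set A : Set (ι → ℝ) := {v | (∀ i, v i ∈ Set.Icc (0:ℝ) 1) ∧
    ∀ i ∈ genVertices w, i ≠ 0 →
      extVal w x v (φ (i - 1)) + extVal w x v (φ i) ≤ 1} with hA
  set C : Set (ℝ × (ι₁ → ℝ)) := {p | (∀ i, p.2 i ∈ Set.Icc (0:ℝ) 1) ∧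
    ∀ i ∈ genVertices w₁, i ≠ 0 →
      extVal w₁ p.1 p.2 (φ₁ (i - 1)) + extVal w₁ p.1 p.2 (φ₁ i) ≤ 1} with hC
  set D : Set (ℝ × (ι₁ → ℝ)) := {p | p.1 ∈ Set.Icc (0:ℝ) (1 - x)} ∩ C with hD
  have hAmeas : MeasurableSet A :=
    measurableSet_Q w φ (measurable_const (a := x)) measurable_id
  have hCmeas : MeasurableSet C := measurableSet_Q w₁ φ₁ measurable_fst measurable_snd
  have hDmeas : MeasurableSet D := (measurable_fst measurableSet_Icc).inter hCmeas
  have hpre : G ⁻¹' A = D := by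
    ext ⟨y, v₁⟩
    simp only [Set.mem_preimage, hA, hD, hC, Set.mem_setOf_eq, Set.mem_inter_iff, Set.mem_Icc]
    constructor
    · rintro ⟨hbox, hcon⟩
      have hy : y ∈ Set.Icc (0:ℝ) 1 := by
        have := hbox (ε (Sum.inl ())); rwa [hG1] at this
      have hxy : x + y ≤ 1 := by
        have := hcon 1 h1g one_ne_zero; rwa [key1] at this
      refine ⟨⟨hy.1, by linarith⟩,
        fun m => by have := hbox (ε (Sum.inr m)); rwa [hG2] at this, ?_⟩
      intro m hm hm0
      have := hcon (m + 1) (gen_shift hw hpm hm) (by omega)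
      rwa [key2 y v₁ m hm hm0] at this
    · rintro ⟨⟨hy0, hy1⟩, hbox₁, hcon₁⟩
      constructor
      · intro i
        obtain ⟨i', rfl⟩ := ε.surjective i
        rcases i' with ⟨⟩ | m
        · rw [hG1]; exact ⟨hy0, by linarith⟩
        · rw [hG2]; exact hbox₁ m
      · intro i hi hi0
        rw [hgen, Finset.mem_insert, Finset.mem_insert, Finset.mem_image] at hi
        rcases hi with rfl | rfl | ⟨m, hm, rfl⟩
        · omega
        · rw [key1]; linarith
        · rw [Finset.mem_erase] at hm
          rw [key2 y v₁ m hm.2 hm.1]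
          exact hcon₁ m hm.2 hm.1
  have hvol : volume A = ∫⁻ y in Set.Icc (0:ℝ) (1 - x),
      volume {v₁ : ι₁ → ℝ | (y, v₁) ∈ C} := by
    rw [← hGmp.measure_preimage hAmeas.nullMeasurableSet, hpre]
    have hprodvol : (volume : Measure (ℝ × (ι₁ → ℝ))) = (volume : Measure ℝ).prod volume := rfl
    rw [hprodvol, Measure.prod_apply hDmeas, ← lintegral_indicator measurableSet_Icc]
    apply lintegral_congr
    intro y
    by_cases hy : y ∈ Set.Icc (0:ℝ) (1 - x)
    · rw [Set.indicator_of_mem hy]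
      congr 1
      ext v₁
      rw [Set.mem_Icc] at hy
      simp [hD, hy.1, hy.2]
    · rw [Set.indicator_of_notMem hy]
      convert measure_empty
      · ext v₁
        rw [Set.mem_Icc] at hy
        simp only [hD, Set.mem_preimage, Set.mem_inter_iff, Set.mem_setOf_eq, Set.mem_Icc,
          Set.mem_empty_iff_false, iff_false]
        rintro ⟨⟨h0, h1⟩, -⟩
        exact hy ⟨h0, h1⟩
      · infer_instance
  have hfin : ∀ y : ℝ, volume {v₁ : ι₁ → ℝ | (y, v₁) ∈ C} ≤ 1 := by
    intro y
    have hsub : {v₁ : ι₁ → ℝ | (y, v₁) ∈ C} ⊆ Set.pi Set.univ fun _ => Set.Icc (0:ℝ) 1 :=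
      fun v₁ hv₁ => by
        intro i _
        exact hv₁.1 i
    calc volume {v₁ : ι₁ → ℝ | (y, v₁) ∈ C}
        ≤ volume (Set.pi Set.univ fun _ : ι₁ => Set.Icc (0:ℝ) 1) := measure_mono hsub
      _ = 1 := by
          rw [volume_pi_pi]
          simp [Real.volume_Icc]
  have hmeas_slice : Measurable fun y : ℝ => volume {v₁ : ι₁ → ℝ | (y, v₁) ∈ C} :=
    measurable_measure_prodMk_left hCmeas
  have h01x : (0:ℝ) ≤ 1 - x := by linarith
  rw [intervalIntegral.integral_of_le h01x]
  have hQ : ∀ y : ℝ, (volume {v₁ : ι₁ → ℝ |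
      (∀ i, v₁ i ∈ Set.Icc (0:ℝ) 1) ∧
      ∀ i ∈ genVertices w₁, i ≠ 0 →
        extVal w₁ y v₁ (φ₁ (i - 1)) + extVal w₁ y v₁ (φ₁ i) ≤ 1}).toReal =
      (volume {v₁ : ι₁ → ℝ | (y, v₁) ∈ C}).toReal := fun y => rfl
  calc (volume A).toReal
      = (∫⁻ y in Set.Icc (0:ℝ) (1 - x), volume {v₁ : ι₁ → ℝ | (y, v₁) ∈ C}).toReal := by
        rw [hvol]
    _ = (∫⁻ y in Set.Ioc (0:ℝ) (1 - x), volume {v₁ : ι₁ → ℝ | (y, v₁) ∈ C}).toReal := by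
        rw [setLIntegral_congr (Ioc_ae_eq_Icc (α := ℝ) (μ := volume))]
    _ = ∫ y in Set.Ioc (0:ℝ) (1 - x), (volume {v₁ : ι₁ → ℝ | (y, v₁) ∈ C}).toReal := by
        rw [MeasureTheory.integral_toReal (hmeas_slice.aemeasurable.restrict)
          (ae_of_all _ fun y => lt_of_le_of_lt (hfin y) ENNReal.one_lt_top)]
    _ = ∫ y in Set.Ioc (0:ℝ) (1 - x),
        (volume {v₁ : ι₁ → ℝ |
          (∀ i, v₁ i ∈ Set.Icc (0:ℝ) 1) ∧
          ∀ i ∈ genVertices w₁, i ≠ 0 →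
            extVal w₁ y v₁ (φ₁ (i - 1)) + extVal w₁ y v₁ (φ₁ i) ≤ 1}).toReal := by
        simp only [hQ]
end

section
/- Let w be a Catalan word of length 2k and let π : {0,1,...,2k} → {1,...,n} be any function such that whenever w[i] = w[j] with i < j, one has (π(i-1), π(i)) = (π(j), π(j-1)). Then π(0) = π(2k). -/
open MeasureTheory

lemma doubleReduces_key (w : List ℕ) (hd : DoubleReduces w) : ∀ (π : ℕ → ℕ),
    (∀ s t, s < w.length → t < w.length → s ≠ t → w[s]? = w[t]? →
      (π s, π (s + 1)) = (π (t + 1), π t)) → π 0 = π w.length := by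
  induction hd with
  | nil => intro π _; simp
  | step u v a hred ih =>
    intro π hπ
    set m := u.length with hm
    have hlen : (u ++ a :: a :: v).length = m + 2 + v.length := by simp [hm]; omega
    have hget_m : (u ++ a :: a :: v)[m]? = some a := by
      rw [List.getElem?_append_right (le_refl _)]; simp
    have hget_m1 : (u ++ a :: a :: v)[(m + 1)]? = some a := by
      rw [List.getElem?_append_right (by omega)]; simp [hm]
    have hpair : π m = π (m + 2) := by
      have h := hπ m (m + 1) (by omega) (by omega) (by omega) (hget_m.trans hget_m1.symm)
      have := congrArg Prod.fst h
      simpa using this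
    set π' : ℕ → ℕ := fun t => if t < m then π t else π (t + 2) with hπ'
    have hσget : ∀ p, p < (u ++ v).length →
        (u ++ v)[p]? = (u ++ a :: a :: v)[(if p < m then p else p + 2)]? := by
      intro p hp
      by_cases h : p < m
      · simp only [if_pos h]
        rw [List.getElem?_append_left h, List.getElem?_append_left h]
      · simp only [if_neg h]
        rw [List.getElem?_append_right (by omega), List.getElem?_append_right (by omega)]
        have : p + 2 - m = (p - m) + 2 := by omega
        rw [this]
        simp [hm]
    have hσπ : ∀ p, π' p = π (if p < m then p else p + 2) := by
      intro p
      by_cases h : p < m <;> simp [hπ', h]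
    have hσπ1 : ∀ p, π' (p + 1) = π ((if p < m then p else p + 2) + 1) := by
      intro p
      by_cases h : p + 1 < m
      · have : p < m := by omega
        simp [hπ', h, this]
      · by_cases h2 : p < m
        · have : p + 1 = m := by omega
          simp [hπ', h, h2, this, hpair.symm]
        · have : ¬ p + 1 < m := by omega
          simp [hπ', h2, this]
    have hnew : ∀ s t, s < (u ++ v).length → t < (u ++ v).length → s ≠ t →
        (u ++ v)[s]? = (u ++ v)[t]? →
        (π' s, π' (s + 1)) = (π' (t + 1), π' t) := by
      intro s t hs ht hne hgt
      have hL : (u ++ v).length = m + v.length := by simp [hm]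
      have h := hπ (if s < m then s else s + 2) (if t < m then t else t + 2)
        (by split <;> omega) (by split <;> omega)
        (by split <;> split <;> omega)
        (by rw [← hσget s hs, ← hσget t ht]; exact hgt)
      rw [hσπ s, hσπ1 s, hσπ t, hσπ1 t]
      exact h
    have hIH := ih π' hnew
    have h0 : π' 0 = π 0 := by
      by_cases h : 0 < m
      · simp [hπ', h]
      · have hm0 : m = 0 := by omega
        simp only [hπ', hm0] at hpair ⊢
        simp [hpair.symm]
    have hL : π' ((u ++ v).length) = π ((u ++ a :: a :: v).length) := by
      have h1 : ¬ (u ++ v).length < m := by simp [hm]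
      simp only [hπ', if_neg h1]
      congr 1
      simp [hm]; omega
    rw [← h0, ← hL, hIH]

/-- If `w` is a Catalan word of length `2k` and `π : {0,…,2k} → {1,…,n}` is
any function such that `w[i] = w[j]` (`i ≠ j`) implies
`(π(i-1), π(i)) = (π(j), π(j-1))`, then `π(0) = π(2k)`.  (In the `0`-based
list indexing, positions `s = i-1`, `t = j-1`.) -/
theorem stmt18 (k : ℕ) (w : List ℕ) (hw : w.length = 2 * k)
    (hcat : IsCatalanWord w) (π : ℕ → ℕ)
    (hπ : ∀ s t, s < w.length → t < w.length → s ≠ t → w[s]? = w[t]? →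
      (π s, π (s + 1)) = (π (t + 1), π t)) :
    π 0 = π (2 * k) := by
  rw [← hw]
  exact doubleReduces_key w hcat.2 π hπ
end
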